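/- Let 1/2 < H < 1 and H − 1/2 < λ < 1/2. There exists a constant C depending only on H, T and λ such that E[ sup_{0≤t≤T} ∫_0^{t̄_k} ρ_{H,2}(t̄_k, s) |A^k(s) − B(s)| ds ] ≤ C ε_k^{1−2λ} for every k ≥ 1, where ρ_{H,2}(t,s) := s^{−H−1/2} ∫_s^t u^{H−3/2} (u−s)^{H−1/2} du. -/

import Mathlib

open MeasureTheory ProbabilityTheory Filter Set
open scoped ENNReal NNReal Topology Classical

noncomputable section

variable {Ω : Type} [MeasurableSpace Ω]

/-- One-dimensional standard Brownian motion: measurable in space, starting at `0`,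
with a.s. continuous paths, Gaussian increments of variance `t - s`, and independent
increments. -/
structure IsBM (P : Measure Ω) (B : ℝ → Ω → ℝ) : Prop where
  meas : ∀ t, Measurable (B t)
  start : ∀ᵐ ω ∂P, B 0 ω = 0
  cont : ∀ᵐ ω ∂P, Continuous fun t => B t ω
  gauss : ∀ s t : ℝ, 0 ≤ s → s ≤ t →
    P.map (fun ω => B t ω - B s ω) = gaussianReal 0 ((t - s).toNNReal)
  indep : ∀ u : ℕ → ℝ, Monotone u → (∀ i, 0 ≤ u i) →
    iIndepFun (fun i ω => B (u (i + 1)) ω - B (u i) ω) P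

/-- The hitting times `T^k_n`: `T^k_0 = 0` and
`T^k_{n+1} = inf {t > T^k_n : |B(t) - B(T^k_n)| = ε}`. -/
def hitT (B : ℝ → Ω → ℝ) (ε : ℝ) : ℕ → Ω → ℝ
  | 0 => fun _ => 0
  | n + 1 => fun ω =>
      sInf {t : ℝ | hitT B ε n ω < t ∧ |B t ω - B (hitT B ε n ω) ω| = ε}

/-- The sign `σ^k_n` of the `n`-th increment of `B` along the hitting times. -/
def wSign (B : ℝ → Ω → ℝ) (ε : ℝ) (n : ℕ) (ω : Ω) : ℝ :=
  if 0 < B (hitT B ε n ω) ω - B (hitT B ε (n - 1) ω) ω then 1 else -1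

/-- The continuous-time random walk `A^k(t) = Σ_{n ≥ 1} ε σ^k_n 1{T^k_n ≤ t}`. -/
def walk (B : ℝ → Ω → ℝ) (ε : ℝ) (t : ℝ) (ω : Ω) : ℝ :=
  ∑' n : ℕ, if hitT B ε (n + 1) ω ≤ t then ε * wSign B ε (n + 1) ω else 0

/-- The kernel `ρ_{H,2}(t,s) = s^{−H−1/2} ∫_s^t u^{H−3/2}(u−s)^{H−1/2} du`. -/
def rho2 (H : ℝ) (t s : ℝ) : ℝ :=
  s ^ (-H - 1 / 2) * ∫ u in s..t, u ^ (H - 3 / 2) * (u - s) ^ (H - 1 / 2)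

/-- The last hitting time before `t`: `t̄_k = max{T^k_n : T^k_n ≤ t}`. -/
def lastT (B : ℝ → Ω → ℝ) (ε : ℝ) (t : ℝ) (ω : Ω) : ℝ :=
  sSup {r : ℝ | (∃ n : ℕ, r = hitT B ε n ω) ∧ r ≤ t}



open Real in
private lemma _dummy_open : True := trivial

lemma two_mul_le_exp {y : ℝ} (hy : 0 ≤ y) : 2 * y ≤ Real.exp y := by
  have h1 : 1 + y / 2 ≤ Real.exp (y / 2) := by
    have := Real.add_one_le_exp (y / 2); linarith
  have h2 : (1 + y / 2) ^ 2 ≤ (Real.exp (y / 2)) ^ 2 := by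
    apply pow_le_pow_left₀ (by linarith) h1
  rw [← Real.exp_nat_mul] at h2
  ring_nf at h2 ⊢
  nlinarith [sq_nonneg (1 - y / 2), Real.exp_pos y]

lemma sq_exp_bound {v x : ℝ} (hv : 0 < v) :
    x ^ 2 * Real.exp (-x ^ 2 / (2 * v)) ≤ 2 * v * Real.exp (-x ^ 2 / (4 * v)) := by
  set y : ℝ := x ^ 2 / (4 * v) with hy
  have hy0 : 0 ≤ y := by positivity
  have hx2 : x ^ 2 = 4 * v * y := by rw [hy]; field_simp
  have he : Real.exp (-x ^ 2 / (2 * v)) = Real.exp (-y) * Real.exp (-y) := by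
    rw [← Real.exp_add]; congr 1; rw [hx2]; field_simp; ring
  have he2 : Real.exp (-x ^ 2 / (4 * v)) = Real.exp (-y) := by
    congr 1; rw [hx2]; field_simp
  rw [he, he2, hx2]
  have h2y := two_mul_le_exp hy0
  have hee : Real.exp (-y) * Real.exp y = 1 := by rw [← Real.exp_add]; simp
  have hpos := Real.exp_pos (-y)
  have h3 : 2 * y * Real.exp (-y) ≤ 1 := by
    calc 2 * y * Real.exp (-y) ≤ Real.exp y * Real.exp (-y) :=
          mul_le_mul_of_nonneg_right h2y (le_of_lt hpos)
      _ = 1 := by rw [mul_comm]; exact hee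
  have h4 : 0 ≤ 2 * v * Real.exp (-y) := by positivity
  nlinarith [mul_le_mul_of_nonneg_left h3 h4]

lemma gauss_sq_bound (v : ℝ≥0) :
    ∫⁻ x, ENNReal.ofReal (x ^ 2) ∂(gaussianReal 0 v) ≤ ENNReal.ofReal (3 * v) := by
  rcases eq_or_ne v 0 with hv | hv
  · rw [hv, gaussianReal_zero_var]
    rw [lintegral_dirac' _ (by measurability)]
    simp
  · rw [gaussianReal_of_var_ne_zero _ hv,
      lintegral_withDensity_eq_lintegral_mul _ (measurable_gaussianPDF _ _)
        (by measurability)]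
    have hv0 : (0:ℝ) < (v:ℝ) := by positivity
    have hsq2 : Real.sqrt (2 * Real.pi * v) ≠ 0 := by
      apply ne_of_gt; apply Real.sqrt_pos.mpr; positivity
    have hpt : ∀ x : ℝ, (gaussianPDF 0 v * fun x => ENNReal.ofReal (x ^ 2)) x ≤
        ENNReal.ofReal ((2 * v * (Real.sqrt (2 * Real.pi * v))⁻¹) * Real.exp (-x ^ 2 / (4 * v))) := by
      intro x
      simp only [Pi.mul_apply, gaussianPDF]
      rw [← ENNReal.ofReal_mul (gaussianPDFReal_nonneg _ _ _)]
      apply ENNReal.ofReal_le_ofReal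
      rw [gaussianPDFReal]
      have hb := sq_exp_bound (v := v) (x := x) hv0
      have hnn : (0:ℝ) ≤ (Real.sqrt (2 * Real.pi * v))⁻¹ := by positivity
      simp only [zero_sub, neg_neg, sub_zero]
      calc (Real.sqrt (2 * Real.pi * v))⁻¹ * Real.exp (-x ^ 2 / (2 * v)) * x ^ 2
          = (Real.sqrt (2 * Real.pi * v))⁻¹ * (x ^ 2 * Real.exp (-x ^ 2 / (2 * v))) := by ring
        _ ≤ (Real.sqrt (2 * Real.pi * v))⁻¹ * (2 * v * Real.exp (-x ^ 2 / (4 * v))) :=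
            mul_le_mul_of_nonneg_left hb hnn
        _ = 2 * v * (Real.sqrt (2 * Real.pi * v))⁻¹ * Real.exp (-x ^ 2 / (4 * v)) := by ring
    calc ∫⁻ x, (gaussianPDF 0 v * fun x => ENNReal.ofReal (x ^ 2)) x
        ≤ ∫⁻ x, ENNReal.ofReal ((2 * v * (Real.sqrt (2 * Real.pi * v))⁻¹) *
            Real.exp (-x ^ 2 / (4 * v))) := lintegral_mono hpt
      _ = ENNReal.ofReal (∫ x, (2 * v * (Real.sqrt (2 * Real.pi * v))⁻¹) *
            Real.exp (-x ^ 2 / (4 * v))) := by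
          rw [ofReal_integral_eq_lintegral_ofReal]
          · exact (Integrable.const_mul (by
              have : ∀ x : ℝ, Real.exp (-x ^ 2 / (4 * v)) = Real.exp (-(1/(4*v)) * x ^ 2) := by
                intro x; congr 1; field_simp
              simp_rw [this]
              exact integrable_exp_neg_mul_sq (by positivity)) _)
          · exact ae_of_all _ fun x => by positivity
      _ ≤ ENNReal.ofReal (3 * v) := by
          apply ENNReal.ofReal_le_ofReal
          rw [integral_const_mul]
          have : ∫ x : ℝ, Real.exp (-x ^ 2 / (4 * v)) = Real.sqrt (Real.pi / (1/(4*v))) := by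
            have h : ∀ x : ℝ, Real.exp (-x ^ 2 / (4 * v)) = Real.exp (-(1/(4*v)) * x ^ 2) := by
              intro x; congr 1; field_simp
            simp_rw [h]
            exact integral_gaussian _
          rw [this]
          have hsqrtv : Real.sqrt (Real.pi / (1/(4*v))) = Real.sqrt 2 * Real.sqrt (2 * Real.pi * v) := by
            rw [← Real.sqrt_mul (by norm_num : (0:ℝ) ≤ 2)]
            congr 1
            field_simp
            ring
          rw [hsqrtv]
          have h2 : Real.sqrt 2 ≤ 3 / 2 := by
            rw [show (3:ℝ)/2 = Real.sqrt ((3/2)^2) by rw [Real.sqrt_sq]; norm_num]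
            exact Real.sqrt_le_sqrt (by norm_num)
          calc 2 * ↑v * (Real.sqrt (2 * Real.pi * ↑v))⁻¹ * (Real.sqrt 2 * Real.sqrt (2 * Real.pi * ↑v))
              = 2 * v * Real.sqrt 2 := by field_simp
            _ ≤ 3 * v := by nlinarith

lemma gauss_cheb (v : ℝ≥0) {a : ℝ} (ha : 0 < a) :
    gaussianReal 0 v {x : ℝ | a < |x|} ≤ ENNReal.ofReal (3 * v / a ^ 2) := by
  have hsub : {x : ℝ | a < |x|} ⊆ {x : ℝ | ENNReal.ofReal (a ^ 2) ≤ ENNReal.ofReal (x ^ 2)} := by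
    intro x hx
    simp only [mem_setOf_eq] at hx ⊢
    apply ENNReal.ofReal_le_ofReal
    calc a ^ 2 ≤ |x| ^ 2 := by nlinarith [abs_nonneg x]
      _ = x ^ 2 := sq_abs x
  have h1 : ENNReal.ofReal (a ^ 2) * gaussianReal 0 v {x : ℝ | a < |x|} ≤
      ENNReal.ofReal (3 * v) := by
    calc ENNReal.ofReal (a ^ 2) * gaussianReal 0 v {x : ℝ | a < |x|}
        ≤ ENNReal.ofReal (a ^ 2) *
          gaussianReal 0 v {x : ℝ | ENNReal.ofReal (a ^ 2) ≤ ENNReal.ofReal (x ^ 2)} :=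
          mul_le_mul_right (measure_mono hsub) _
      _ ≤ ∫⁻ x, ENNReal.ofReal (x ^ 2) ∂(gaussianReal 0 v) :=
          mul_meas_ge_le_lintegral₀ (by measurability) _
      _ ≤ ENNReal.ofReal (3 * v) := gauss_sq_bound v
  have ha2 : ENNReal.ofReal (a ^ 2) ≠ 0 := by
    simp only [ne_eq, ENNReal.ofReal_eq_zero, not_le]; positivity
  rw [ENNReal.ofReal_div_of_pos (by positivity)]
  rw [ENNReal.le_div_iff_mul_le (Or.inl ha2) (Or.inl ENNReal.ofReal_ne_top)]
  rw [mul_comm] at h1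
  exact h1

lemma gauss_abs_bound (v : ℝ≥0) :
    ∫⁻ x, ENNReal.ofReal |x| ∂(gaussianReal 0 v) ≤ ENNReal.ofReal (2 * Real.sqrt v) := by
  rcases eq_or_ne v 0 with hv | hv
  · rw [hv, gaussianReal_zero_var, lintegral_dirac' _ measurable_abs.ennreal_ofReal]
    simp
  · have hv0 : (0:ℝ) < (v:ℝ) := by positivity
    have hsv : (0:ℝ) < Real.sqrt v := Real.sqrt_pos.mpr hv0
    have hpt : ∀ x : ℝ, ENNReal.ofReal |x| ≤
        ENNReal.ofReal ((2 * Real.sqrt v)⁻¹) * ENNReal.ofReal (x ^ 2) +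
          ENNReal.ofReal (Real.sqrt v / 2) := by
      intro x
      rw [← ENNReal.ofReal_mul (by positivity), ← ENNReal.ofReal_add (by positivity) (by positivity)]
      apply ENNReal.ofReal_le_ofReal
      have hsq : Real.sqrt v * Real.sqrt v = v := Real.mul_self_sqrt (le_of_lt hv0)
      have h0 : 0 ≤ (|x| - Real.sqrt v) ^ 2 := sq_nonneg _
      have hxx : |x| ^ 2 = x ^ 2 := sq_abs x
      have h2 : 2 * Real.sqrt v * |x| ≤ x ^ 2 + v := by nlinarith
      have key : 2 * Real.sqrt v * ((2 * Real.sqrt v)⁻¹ * x ^ 2 + Real.sqrt v / 2 - |x|) =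
          x ^ 2 + v - 2 * Real.sqrt v * |x| := by
        field_simp
        linear_combination hsq
      nlinarith [key, h2, hsv]
    calc ∫⁻ x, ENNReal.ofReal |x| ∂(gaussianReal 0 v)
        ≤ ∫⁻ x, (ENNReal.ofReal ((2 * Real.sqrt v)⁻¹) * ENNReal.ofReal (x ^ 2) +
            ENNReal.ofReal (Real.sqrt v / 2)) ∂(gaussianReal 0 v) := lintegral_mono hpt
      _ = ENNReal.ofReal ((2 * Real.sqrt v)⁻¹) *
            (∫⁻ x, ENNReal.ofReal (x ^ 2) ∂(gaussianReal 0 v)) +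
            ENNReal.ofReal (Real.sqrt v / 2) := by
          rw [lintegral_add_right _ measurable_const, lintegral_const_mul' _ _ ENNReal.ofReal_ne_top,
            lintegral_const, measure_univ, mul_one]
      _ ≤ ENNReal.ofReal ((2 * Real.sqrt v)⁻¹) * ENNReal.ofReal (3 * v) +
            ENNReal.ofReal (Real.sqrt v / 2) :=
          add_le_add_left (mul_le_mul_right (gauss_sq_bound v) _) _
      _ ≤ ENNReal.ofReal (2 * Real.sqrt v) := by
          rw [← ENNReal.ofReal_mul (by positivity), ← ENNReal.ofReal_add (by positivity) (by positivity)]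
          apply ENNReal.ofReal_le_ofReal
          have hsq : Real.sqrt v * Real.sqrt v = v := Real.mul_self_sqrt (le_of_lt hv0)
          rw [show (2 * Real.sqrt v)⁻¹ * (3 * v) = 3 / 2 * Real.sqrt v by
            field_simp; nlinarith]
          linarith

lemma gauss_interval (v : ℝ≥0) {R : ℝ} (hR : 0 ≤ R) (hv : v ≠ 0) :
    gaussianReal 0 v {x : ℝ | |x| ≤ R} ≤
      ENNReal.ofReal ((Real.sqrt (2 * Real.pi * v))⁻¹ * (2 * R)) := by
  have hset : {x : ℝ | |x| ≤ R} = Icc (-R) R := by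
    ext x; simp [abs_le]
  rw [gaussianReal_apply _ hv, hset]
  calc ∫⁻ x in Icc (-R) R, gaussianPDF 0 v x
      ≤ ∫⁻ _ in Icc (-R) R, ENNReal.ofReal ((Real.sqrt (2 * Real.pi * v))⁻¹) := by
        apply setLIntegral_mono measurable_const
        intro x _
        rw [gaussianPDF]
        apply ENNReal.ofReal_le_ofReal
        rw [gaussianPDFReal]
        have h1 : Real.exp (-(x - 0) ^ 2 / (2 * v)) ≤ 1 := by
          rw [Real.exp_le_one_iff]
          apply div_nonpos_of_nonpos_of_nonneg
          · simp [sq_nonneg]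
          · positivity
        have h2 : (0:ℝ) ≤ (Real.sqrt (2 * Real.pi * v))⁻¹ := by positivity
        nlinarith
    _ = ENNReal.ofReal ((Real.sqrt (2 * Real.pi * v))⁻¹) * volume (Icc (-R) R) := by
        rw [setLIntegral_const]
    _ ≤ ENNReal.ofReal ((Real.sqrt (2 * Real.pi * v))⁻¹ * (2 * R)) := by
        rw [Real.volume_Icc, ENNReal.ofReal_mul (by positivity)]
        apply mul_le_mul_right
        apply ENNReal.ofReal_le_ofReal
        linarith

set_option linter.unusedSectionVars false
section Pathwise

variable {B : ℝ → Ω → ℝ} {ω : Ω} {ε : ℝ}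

lemma exists_big (hu : ∀ R : ℝ, ∃ n : ℕ, R < |B n ω|) (t0 R : ℝ) :
    ∃ n : ℕ, t0 < n ∧ R < |B n ω| := by
  classical
  obtain ⟨n, hn⟩ := hu (max R ((Finset.range (⌈t0⌉₊ + 1)).sup' ⟨0, by simp⟩ fun j => |B j ω|))
  refine ⟨n, ?_, lt_of_le_of_lt (le_max_left _ _) hn⟩
  by_contra h
  push_neg at h
  have hmem : n ∈ Finset.range (⌈t0⌉₊ + 1) := by
    have : (n : ℕ) ≤ ⌈t0⌉₊ := by
      have := Nat.ceil_mono h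
      simpa using this
    simpa [Nat.lt_succ_iff] using this
  have : |B n ω| ≤ (Finset.range (⌈t0⌉₊ + 1)).sup' ⟨0, by simp⟩ (fun j : ℕ => |B (j : ℝ) ω|) :=
    Finset.le_sup' (fun j : ℕ => |B (j : ℝ) ω|) hmem
  have := lt_of_le_of_lt (le_max_right R _) hn
  linarith

lemma hit_step (hc : Continuous fun t => B t ω) (hu : ∀ R : ℝ, ∃ n : ℕ, R < |B n ω|)
    (hε : 0 < ε) {t0 : ℝ} (ht0 : 0 ≤ t0) :
    t0 < sInf {t : ℝ | t0 < t ∧ |B t ω - B t0 ω| = ε} ∧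
    |B (sInf {t : ℝ | t0 < t ∧ |B t ω - B t0 ω| = ε}) ω - B t0 ω| = ε ∧
    ∀ u, t0 ≤ u → u < sInf {t : ℝ | t0 < t ∧ |B t ω - B t0 ω| = ε} →
      |B u ω - B t0 ω| < ε := by
  set g : ℝ → ℝ := fun t => |B t ω - B t0 ω| with hgdef
  have hgc : Continuous g := (hc.sub continuous_const).abs
  have hg0 : g t0 = 0 := by simp [hgdef]
  -- small ball where g < ε
  obtain ⟨δ, hδ0, hδ⟩ : ∃ δ > 0, ∀ u, t0 ≤ u → u ≤ t0 + δ → g u < ε := by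
    have h1 := hgc.continuousAt (x := t0)
    rw [Metric.continuousAt_iff] at h1
    obtain ⟨θ, hθ0, hθ⟩ := h1 ε hε
    refine ⟨θ / 2, by positivity, fun u hu1 hu2 => ?_⟩
    have hd : dist u t0 < θ := by
      rw [Real.dist_eq, abs_lt]; constructor <;> nlinarith
    have := hθ hd
    rw [Real.dist_eq, hg0, sub_zero] at this
    calc g u = |g u| := (abs_of_nonneg (abs_nonneg _)).symm
    _ < ε := this
  set S : Set ℝ := {t : ℝ | t0 < t ∧ g t = ε} with hSdef
  -- a point where g exceeds ε
  obtain ⟨n, hn1, hn2⟩ := exists_big hu t0 (|B t0 ω| + ε)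
  have hgn : ε < g n := by
    have : |B n ω| - |B t0 ω| ≤ g n := by
      simpa [hgdef] using abs_sub_abs_le_abs_sub (B n ω) (B t0 ω)
    linarith
  -- IVT gives a member of S
  have hmemS : ∃ x, x ∈ S := by
    have hivt := intermediate_value_Icc (le_of_lt hn1) hgc.continuousOn
      (a := t0) (b := (n : ℝ))
    have : ε ∈ g '' Icc t0 (n : ℝ) := hivt ⟨by rw [hg0]; exact le_of_lt hε, le_of_lt hgn⟩
    obtain ⟨x, hx1, hx2⟩ := this
    refine ⟨x, lt_of_le_of_ne hx1.1 ?_, hx2⟩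
    intro h
    exact ne_of_gt hε (by rw [← hx2, ← h]; exact hg0)
  -- S equals a closed set
  have hSeq : S = Ici (t0 + δ) ∩ g ⁻¹' {ε} := by
    ext t
    simp only [hSdef, mem_setOf_eq, mem_inter_iff, mem_Ici, mem_preimage, mem_singleton_iff]
    constructor
    · rintro ⟨ht1, ht2⟩
      refine ⟨?_, ht2⟩
      by_contra hlt
      push_neg at hlt
      exact absurd ht2 (ne_of_lt (hδ t (le_of_lt ht1) (le_of_lt hlt)))
    · rintro ⟨ht1, ht2⟩
      exact ⟨by linarith, ht2⟩
  have hbdd : BddBelow S := by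
    rw [hSeq]; exact ⟨t0 + δ, fun x hx => hx.1⟩
  obtain ⟨x0, hx0⟩ := hmemS
  have hmem' : sInf (Ici (t0 + δ) ∩ g ⁻¹' {ε}) ∈ Ici (t0 + δ) ∩ g ⁻¹' {ε} :=
    IsClosed.csInf_mem (isClosed_Ici.inter (isClosed_singleton.preimage hgc))
      ⟨x0, hSeq ▸ hx0⟩ ⟨t0 + δ, fun x hx => hx.1⟩
  have hmem : sInf S ∈ S := by rw [hSeq]; exact hmem'
  refine ⟨hmem.1, hmem.2, fun u hu1 hu2 => ?_⟩
  rcases eq_or_lt_of_le hu1 with h | h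
  · rw [← h]; simpa using hε
  · by_contra hge
    push_neg at hge
    rcases eq_or_lt_of_le hge with h2 | h2
    · exact absurd (csInf_le hbdd (⟨h, h2.symm⟩ : u ∈ S)) (not_le.mpr hu2)
    · have hivt := intermediate_value_Icc (le_of_lt h) hgc.continuousOn (a := t0) (b := u)
      have : ε ∈ g '' Icc t0 u := hivt ⟨by rw [hg0]; exact le_of_lt hε, le_of_lt h2⟩
      obtain ⟨x, hx1, hx2⟩ := this
      have hxS : x ∈ S := by
        refine ⟨lt_of_le_of_ne hx1.1 ?_, hx2⟩
        intro hh
        exact ne_of_gt hε (by rw [← hx2, ← hh]; exact hg0)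
      exact absurd (le_trans (csInf_le hbdd hxS) hx1.2) (not_le.mpr hu2)

lemma hitT_zero (B : ℝ → Ω → ℝ) (ε : ℝ) (ω : Ω) : hitT B ε 0 ω = 0 := rfl

lemma hitT_succ (B : ℝ → Ω → ℝ) (ε : ℝ) (ω : Ω) (n : ℕ) :
    hitT B ε (n + 1) ω =
      sInf {t : ℝ | hitT B ε n ω < t ∧ |B t ω - B (hitT B ε n ω) ω| = ε} := rfl

lemma hitT_spec (hc : Continuous fun t => B t ω) (hu : ∀ R : ℝ, ∃ n : ℕ, R < |B n ω|)
    (hε : 0 < ε) : ∀ n : ℕ, 0 ≤ hitT B ε n ω ∧ hitT B ε n ω < hitT B ε (n + 1) ω ∧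
    |B (hitT B ε (n + 1) ω) ω - B (hitT B ε n ω) ω| = ε ∧
    ∀ u, hitT B ε n ω ≤ u → u < hitT B ε (n + 1) ω → |B u ω - B (hitT B ε n ω) ω| < ε := by
  intro n
  induction n with
  | zero =>
      have h := hit_step hc hu hε (t0 := 0) le_rfl
      rw [hitT_succ]
      exact ⟨le_rfl, by rw [hitT_zero]; exact h.1, by rw [hitT_zero]; exact h.2.1,
        by rw [hitT_zero]; exact h.2.2⟩
  | succ n ih =>
      have h0 : (0:ℝ) ≤ hitT B ε (n+1) ω := le_of_lt (lt_of_le_of_lt ih.1 ih.2.1)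
      have h := hit_step hc hu hε h0
      rw [hitT_succ B ε ω (n+1)]
      exact ⟨h0, h.1, h.2.1, h.2.2⟩

lemma hitT_strictMono (hc : Continuous fun t => B t ω)
    (hu : ∀ R : ℝ, ∃ n : ℕ, R < |B n ω|) (hε : 0 < ε) :
    StrictMono fun n => hitT B ε n ω :=
  strictMono_nat_of_lt_succ fun n => (hitT_spec hc hu hε n).2.1

lemma hitT_tendsto (hc : Continuous fun t => B t ω)
    (hu : ∀ R : ℝ, ∃ n : ℕ, R < |B n ω|) (hε : 0 < ε) :
    Tendsto (fun n => hitT B ε n ω) atTop atTop := by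
  rcases tendsto_of_monotone (hitT_strictMono hc hu hε).monotone with h | ⟨L, hL⟩
  · exact h
  · exfalso
    have h1 : Tendsto (fun n => B (hitT B ε n ω) ω) atTop (𝓝 (B L ω)) :=
      (hc.tendsto L).comp hL
    have h2 : Tendsto (fun n => B (hitT B ε (n+1) ω) ω) atTop (𝓝 (B L ω)) :=
      h1.comp (tendsto_add_atTop_nat 1)
    have h3 : Tendsto (fun n => |B (hitT B ε (n+1) ω) ω - B (hitT B ε n ω) ω|)
        atTop (𝓝 |B L ω - B L ω|) := (h2.sub h1).abs
    rw [sub_self, abs_zero] at h3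
    have h4 : Tendsto (fun _ : ℕ => ε) atTop (𝓝 0) := by
      have : (fun n : ℕ => ε) = fun n => |B (hitT B ε (n+1) ω) ω - B (hitT B ε n ω) ω| := by
        funext n; exact ((hitT_spec hc hu hε n).2.2.1).symm
      rw [this]; exact h3
    exact absurd (tendsto_nhds_unique h4 tendsto_const_nhds).symm (ne_of_gt hε)

lemma exists_lastIdx (hc : Continuous fun t => B t ω)
    (hu : ∀ R : ℝ, ∃ n : ℕ, R < |B n ω|) (hε : 0 < ε) {s : ℝ} (hs : 0 ≤ s) :
    ∃ N : ℕ, hitT B ε N ω ≤ s ∧ s < hitT B ε (N + 1) ω := by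
  classical
  have hex : ∃ n, s < hitT B ε n ω :=
    ((hitT_tendsto hc hu hε).eventually_gt_atTop s).exists
  have hM0 : Nat.find hex ≠ 0 := by
    intro h
    have := Nat.find_spec hex
    rw [h, hitT_zero] at this
    exact absurd this (not_lt.mpr hs)
  refine ⟨Nat.find hex - 1, ?_, ?_⟩
  · have := Nat.find_min hex (m := Nat.find hex - 1) (by omega)
    exact not_lt.mp this
  · have h1 : Nat.find hex - 1 + 1 = Nat.find hex := by omega
    rw [h1]; exact Nat.find_spec hex

lemma walk_eq (hc : Continuous fun t => B t ω) (h0 : B 0 ω = 0)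
    (hu : ∀ R : ℝ, ∃ n : ℕ, R < |B n ω|) (hε : 0 < ε) {s : ℝ} {N : ℕ}
    (h1 : hitT B ε N ω ≤ s) (h2 : s < hitT B ε (N + 1) ω) :
    walk B ε s ω = B (hitT B ε N ω) ω := by
  classical
  have hsm := hitT_strictMono hc hu hε
  rw [walk, tsum_eq_sum (s := Finset.range N) (fun n hn => ?_)]
  · have hterm : ∀ n ∈ Finset.range N,
        (if hitT B ε (n + 1) ω ≤ s then ε * wSign B ε (n + 1) ω else 0)
          = B (hitT B ε (n + 1) ω) ω - B (hitT B ε n ω) ω := by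
      intro n hn
      have hle : hitT B ε (n + 1) ω ≤ s :=
        le_trans (hsm.monotone (Nat.succ_le_of_lt (Finset.mem_range.mp hn))) h1
      rw [if_pos hle, wSign]
      have habs : |B (hitT B ε (n + 1) ω) ω - B (hitT B ε n ω) ω| = ε :=
        (hitT_spec hc hu hε n).2.2.1
      simp only [Nat.add_sub_cancel]
      split_ifs with hpos
      · rw [mul_one]; rw [abs_of_pos hpos] at habs; linarith
      · push_neg at hpos
        rw [abs_of_nonpos (by linarith)] at habs
        rw [mul_neg_one]; linarith
    rw [Finset.sum_congr rfl hterm, Finset.sum_range_sub (f := fun n => B (hitT B ε n ω) ω)]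
    rw [hitT_zero, h0, sub_zero]
  · have hn' : N + 1 ≤ n + 1 := by
      simp only [Finset.mem_range, not_lt] at hn; omega
    have : hitT B ε (N + 1) ω ≤ hitT B ε (n + 1) ω := hsm.monotone hn'
    rw [if_neg (not_le.mpr (lt_of_lt_of_le h2 this))]

lemma walk_dist (hc : Continuous fun t => B t ω) (h0 : B 0 ω = 0)
    (hu : ∀ R : ℝ, ∃ n : ℕ, R < |B n ω|) (hε : 0 < ε) {s : ℝ} (hs : 0 ≤ s) :
    |walk B ε s ω - B s ω| ≤ ε := by
  obtain ⟨N, h1, h2⟩ := exists_lastIdx hc hu hε hs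
  rw [walk_eq hc h0 hu hε h1 h2, abs_sub_comm]
  exact le_of_lt ((hitT_spec hc hu hε N).2.2.2 s h1 h2)

lemma walk_zero_of_small (hc : Continuous fun t => B t ω) (h0 : B 0 ω = 0)
    (hu : ∀ R : ℝ, ∃ n : ℕ, R < |B n ω|) (hε : 0 < ε) {s δ' : ℝ} (hs : 0 ≤ s)
    (hδε : δ' < ε) (hq : ∀ q : ℚ, 0 ≤ (q : ℝ) → (q : ℝ) ≤ s → |B q ω| ≤ δ') :
    walk B ε s ω = 0 ∧ |B s ω| ≤ δ' := by
  have hall : ∀ u : ℝ, 0 ≤ u → u ≤ s → |B u ω| ≤ δ' := by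
    intro u hu0 hus
    rcases eq_or_lt_of_le hu0 with h | h
    · have := hq 0 (by norm_num) (by exact_mod_cast hs)
      simpa [← h] using this
    · refine le_of_forall_pos_le_add fun η hη => ?_
      have h1 := (hc.continuousAt (x := u))
      rw [Metric.continuousAt_iff] at h1
      obtain ⟨θ, hθ0, hθ⟩ := h1 η hη
      obtain ⟨q, hq1, hq2⟩ := exists_rat_btwn (max_lt (by linarith : u - θ < u) h : max (u - θ) 0 < u)
      have hq0 : 0 ≤ (q : ℝ) := le_of_lt (lt_of_le_of_lt (le_max_right _ _) hq1)
      have hqs : (q : ℝ) ≤ s := le_trans (le_of_lt hq2) hus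
      have hdist : dist (q : ℝ) u < θ := by
        rw [Real.dist_eq, abs_lt]
        have := lt_of_le_of_lt (le_max_left (u - θ) 0) hq1
        constructor <;> linarith
      have := hθ hdist
      rw [Real.dist_eq] at this
      have hbq := hq q hq0 hqs
      have htri : |B u ω| ≤ |B u ω - B q ω| + |B q ω| := by
        have h2 := abs_add_le (B u ω - B q ω) (B q ω); simpa using h2
      rw [abs_sub_comm] at this
      linarith
  have hT1 : s < hitT B ε 1 ω := by
    by_contra hle
    push_neg at hle
    have hspec := (hitT_spec hc hu hε 0).2.2.1
    rw [hitT_zero, h0, sub_zero] at hspec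
    have h0T : (0:ℝ) ≤ hitT B ε 1 ω := le_of_lt (lt_of_le_of_lt le_rfl ((hitT_spec hc hu hε 0).2.1))
    have := hall _ h0T hle
    rw [hspec] at this
    linarith
  have hw := walk_eq hc h0 hu hε (N := 0) (by rw [hitT_zero]; exact hs) hT1
  rw [hitT_zero, h0] at hw
  exact ⟨hw, hall s hs le_rfl⟩

end Pathwise

section Ottaviani

variable {P : Measure Ω} [IsProbabilityMeasure P] {B : ℝ → Ω → ℝ}

lemma incr_cheb (hB : IsBM P B) {t1 t2 a : ℝ} (h1 : 0 ≤ t1) (h12 : t1 ≤ t2) (ha : 0 < a) :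
    P {ω | a < |B t2 ω - B t1 ω|} ≤ ENNReal.ofReal (3 * (t2 - t1) / a ^ 2) := by
  have hmeas : Measurable fun ω => B t2 ω - B t1 ω := (hB.meas t2).sub (hB.meas t1)
  have hset : MeasurableSet {x : ℝ | a < |x|} := measurableSet_lt measurable_const measurable_abs
  have heq : P {ω | a < |B t2 ω - B t1 ω|} =
      (P.map fun ω => B t2 ω - B t1 ω) {x : ℝ | a < |x|} := by
    rw [Measure.map_apply hmeas hset]; rfl
  rw [heq, hB.gauss t1 t2 h1 h12]
  refine le_trans (gauss_cheb _ ha) (ENNReal.ofReal_le_ofReal ?_)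
  rw [Real.coe_toNNReal _ (by linarith)]

/-- Ottaviani-type maximal inequality. -/
lemma ottaviani (hB : IsBM P B) {u : ℕ → ℝ} (hmono : Monotone u) (hpos : ∀ i, 0 ≤ u i)
    (hu0 : u 0 = 0) {m : ℕ} {s a : ℝ} (hum : u m = s) (hus : ∀ i, u i ≤ s)
    (ha : 0 < a) (hsa : 3 * s / a ^ 2 ≤ 1 / 2) :
    P {ω | ∃ j ≤ m, 2 * a < |B (u j) ω - B 0 ω|} ≤
      2 * P {ω | a < |B s ω - B 0 ω|} := by
  classical
  have hXmeas : ∀ i : ℕ, Measurable (fun ω => B (u (i + 1)) ω - B (u i) ω) :=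
    fun i => (hB.meas _).sub (hB.meas _)
  have hiIndep := hB.indep u hmono hpos
  have key1 : ∀ (j : ℕ) (ω : Ω), B (u j) ω - B 0 ω =
      ∑ i ∈ Finset.range j, (B (u (i + 1)) ω - B (u i) ω) := by
    intro j ω
    rw [Finset.sum_range_sub (f := fun i => B (u i) ω), hu0]
  have hpsum_meas : ∀ (j i : ℕ), Measurable fun x : ↥(Finset.range j) → ℝ =>
      ∑ p ∈ Finset.filter (fun p => p.1 < i) (Finset.range j).attach, x p := by
    intro j i
    apply Finset.measurable_sum
    intro p _
    exact measurable_pi_apply p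
  have hpsum_eq : ∀ (j i : ℕ), i ≤ j → ∀ ω,
      (∑ p ∈ Finset.filter (fun p => p.1 < i) (Finset.range j).attach,
        (B (u (p.1 + 1)) ω - B (u p.1) ω)) = B (u i) ω - B 0 ω := by
    intro j i hij ω
    rw [key1 i ω]
    rw [Finset.sum_filter,
      Finset.sum_attach (Finset.range j)
        (fun q => if q < i then B (u (q + 1)) ω - B (u q) ω else 0),
      ← Finset.sum_filter]
    congr 1
    ext q
    simp only [Finset.mem_filter, Finset.mem_range]
    omega
  -- tuple maps
  have hΦmeas : ∀ j : ℕ, Measurable fun (ω : Ω) (p : ↥(Finset.range j)) =>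
      B (u (p.1 + 1)) ω - B (u p.1) ω := fun j =>
    measurable_pi_lambda _ fun p => hXmeas p
  have hΨmeas : ∀ j : ℕ, Measurable fun (ω : Ω) (p : ↥(Finset.Ico j m)) =>
      B (u (p.1 + 1)) ω - B (u p.1) ω := fun j =>
    measurable_pi_lambda _ fun p => hXmeas p
  have hindep : ∀ j : ℕ, IndepFun
      (fun (ω : Ω) (p : ↥(Finset.range j)) => B (u (p.1 + 1)) ω - B (u p.1) ω)
      (fun (ω : Ω) (p : ↥(Finset.Ico j m)) => B (u (p.1 + 1)) ω - B (u p.1) ω) P := by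
    intro j
    exact hiIndep.indepFun_finset (Finset.range j) (Finset.Ico j m)
      (by rw [Finset.disjoint_left]
          intro i hi hi2
          simp only [Finset.mem_range] at hi
          simp only [Finset.mem_Ico] at hi2
          omega) hXmeas
  -- events in coordinate space
  have hDAmeas : ∀ j : ℕ, MeasurableSet {x : ↥(Finset.range j) → ℝ |
      (∀ i < j, |∑ p ∈ Finset.filter (fun p => p.1 < i) (Finset.range j).attach, x p| ≤ 2 * a)
      ∧ 2 * a < |∑ p ∈ Finset.filter (fun p => p.1 < j) (Finset.range j).attach, x p|} := by
    intro j
    have hrw : {x : ↥(Finset.range j) → ℝ |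
        (∀ i < j, |∑ p ∈ Finset.filter (fun p => p.1 < i) (Finset.range j).attach, x p| ≤ 2 * a)
        ∧ 2 * a < |∑ p ∈ Finset.filter (fun p => p.1 < j) (Finset.range j).attach, x p|} =
        (⋂ i, ⋂ (_ : i < j), {x : ↥(Finset.range j) → ℝ |
          |∑ p ∈ Finset.filter (fun p => p.1 < i) (Finset.range j).attach, x p| ≤ 2 * a}) ∩
        {x : ↥(Finset.range j) → ℝ |
          2 * a < |∑ p ∈ Finset.filter (fun p => p.1 < j) (Finset.range j).attach, x p|} := by
      ext x
      simp only [mem_inter_iff, mem_iInter, mem_setOf_eq]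
    rw [hrw]
    refine MeasurableSet.inter ?_ ?_
    · exact MeasurableSet.iInter fun i => MeasurableSet.iInter fun _ =>
        measurableSet_le ((hpsum_meas j i).abs) measurable_const
    · exact measurableSet_lt measurable_const ((hpsum_meas j j).abs)
  have hDCmeas : ∀ j : ℕ, MeasurableSet {y : ↥(Finset.Ico j m) → ℝ |
      |∑ p ∈ (Finset.Ico j m).attach, y p| ≤ a} := by
    intro j
    apply measurableSet_le ?_ measurable_const
    apply Measurable.abs
    apply Finset.measurable_sum
    intro p _
    exact measurable_pi_apply p
  set A : ℕ → Set Ω := fun j => {ω | (∀ i < j, |B (u i) ω - B 0 ω| ≤ 2 * a)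
      ∧ 2 * a < |B (u j) ω - B 0 ω|} with hA
  set C : ℕ → Set Ω := fun j => {ω | |B (u m) ω - B (u j) ω| ≤ a} with hC
  have hApre : ∀ j : ℕ, A j =
      (fun (ω : Ω) (p : ↥(Finset.range j)) => B (u (p.1 + 1)) ω - B (u p.1) ω) ⁻¹'
      {x : ↥(Finset.range j) → ℝ |
      (∀ i < j, |∑ p ∈ Finset.filter (fun p => p.1 < i) (Finset.range j).attach, x p| ≤ 2 * a)
      ∧ 2 * a < |∑ p ∈ Finset.filter (fun p => p.1 < j) (Finset.range j).attach, x p|} := by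
    intro j
    ext ω
    simp only [hA, mem_setOf_eq, mem_preimage]
    constructor
    · rintro ⟨h1, h2⟩
      refine ⟨fun i hi => ?_, ?_⟩
      · rw [hpsum_eq j i (le_of_lt hi) ω]; exact h1 i hi
      · rw [hpsum_eq j j le_rfl ω]; exact h2
    · rintro ⟨h1, h2⟩
      refine ⟨fun i hi => ?_, ?_⟩
      · have := h1 i hi; rwa [hpsum_eq j i (le_of_lt hi) ω] at this
      · rwa [hpsum_eq j j le_rfl ω] at h2
  have hCpre : ∀ j : ℕ, j ≤ m → C j =
      (fun (ω : Ω) (p : ↥(Finset.Ico j m)) => B (u (p.1 + 1)) ω - B (u p.1) ω) ⁻¹'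
      {y : ↥(Finset.Ico j m) → ℝ | |∑ p ∈ (Finset.Ico j m).attach, y p| ≤ a} := by
    intro j hj
    ext ω
    simp only [hC, mem_setOf_eq, mem_preimage]
    have heq : ∑ p ∈ (Finset.Ico j m).attach,
        (B (u (p.1 + 1)) ω - B (u p.1) ω) = B (u m) ω - B (u j) ω := by
      rw [Finset.sum_attach (Finset.Ico j m) (fun q => B (u (q + 1)) ω - B (u q) ω)]
      rw [Finset.sum_Ico_eq_sub _ hj, ← key1 m ω, ← key1 j ω]
      ring
    rw [heq]
  have hAmeas : ∀ j, MeasurableSet (A j) := fun j => by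
    rw [hApre j]; exact (hDAmeas j).preimage (hΦmeas j)
  have hCmeas : ∀ j, MeasurableSet (C j) := fun j => by
    rcases le_or_gt j m with hj | hj
    · rw [hCpre j hj]; exact (hDCmeas j).preimage (hΨmeas j)
    · exact measurableSet_le ((hB.meas _).sub (hB.meas _)).abs measurable_const
  have hPAC : ∀ j ≤ m, P (A j ∩ C j) = P (A j) * P (C j) := by
    intro j hj
    rw [hApre j, hCpre j hj]
    exact (hindep j).measure_inter_preimage_eq_mul _ _ (hDAmeas j) (hDCmeas j)
  -- probability of C j
  have hCprob : ∀ j ≤ m, (2⁻¹ : ℝ≥0∞) ≤ P (C j) := by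
    intro j hj
    have hccompl : (C j)ᶜ = {ω | a < |B (u m) ω - B (u j) ω|} := by
      ext ω; simp only [hC, mem_compl_iff, mem_setOf_eq, not_le]
    have hcompl : P (C j)ᶜ ≤ 2⁻¹ := by
      rw [hccompl]
      refine le_trans (incr_cheb hB (hpos j) (hmono hj) ha) ?_
      have h1 : 3 * (u m - u j) / a ^ 2 ≤ 1 / 2 := by
        refine le_trans ?_ hsa
        apply div_le_div_of_nonneg_right ?hnum (by positivity)
        case hnum => have h2 := hpos j; nlinarith [hum, hus m]
      calc ENNReal.ofReal (3 * (u m - u j) / a ^ 2) ≤ ENNReal.ofReal (1/2) :=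
            ENNReal.ofReal_le_ofReal h1
        _ = 2⁻¹ := by
            rw [show (1:ℝ)/2 = (2:ℝ)⁻¹ by norm_num,
              ENNReal.ofReal_inv_of_pos two_pos]
            norm_num
    have h2 : P (C j) = 1 - P (C j)ᶜ := by
      rw [← prob_compl_eq_one_sub (hCmeas j).compl, compl_compl]
    rw [h2]
    calc (2⁻¹ : ℝ≥0∞) = 1 - 2⁻¹ := by
          rw [← ENNReal.inv_two_add_inv_two, ENNReal.add_sub_cancel_right]
          exact ENNReal.inv_ne_top.mpr two_ne_zero
      _ ≤ 1 - P (C j)ᶜ := tsub_le_tsub_left hcompl 1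
  -- G as disjoint union of the A j
  have hGeq : {ω | ∃ j ≤ m, 2 * a < |B (u j) ω - B 0 ω|} =
      ⋃ j ∈ Finset.range (m + 1), A j := by
    ext ω
    simp only [mem_setOf_eq, mem_iUnion, Finset.mem_range, exists_prop]
    constructor
    · rintro ⟨j, hj, hja⟩
      have hex : ∃ i, i ≤ m ∧ 2 * a < |B (u i) ω - B 0 ω| := ⟨j, hj, hja⟩
      classical
      refine ⟨Nat.find hex, by have := (Nat.find_spec hex).1; omega, ?_, (Nat.find_spec hex).2⟩
      intro i hi
      by_contra hgt
      push_neg at hgt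
      have him : i ≤ m := le_trans (le_of_lt hi) (Nat.find_spec hex).1
      exact absurd ⟨him, hgt⟩ (Nat.find_min hex hi)
    · rintro ⟨j, hj, _, hja⟩
      exact ⟨j, by omega, hja⟩
  have hdisjAux : ∀ i j : ℕ, i < j → Disjoint (A i) (A j) := by
    intro i j hlt
    apply Set.disjoint_left.mpr
    rintro ω ⟨_, hi2⟩ ⟨hj1, _⟩
    exact absurd (hj1 i hlt) (not_le.mpr hi2)
  have hdisj : Set.PairwiseDisjoint (Finset.range (m+1) : Set ℕ) A := by
    intro i _ j _ hij
    rcases lt_or_gt_of_ne hij with h | h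
    · exact hdisjAux i j h
    · exact (hdisjAux j i h).symm
  have hsum : P {ω | ∃ j ≤ m, 2 * a < |B (u j) ω - B 0 ω|} =
      ∑ j ∈ Finset.range (m+1), P (A j) := by
    rw [hGeq]
    exact measure_biUnion_finset hdisj fun j _ => hAmeas j
  -- core chain
  have hchain : 2⁻¹ * P {ω | ∃ j ≤ m, 2 * a < |B (u j) ω - B 0 ω|} ≤
      P {ω | a < |B s ω - B 0 ω|} := by
    rw [hsum, Finset.mul_sum]
    have hstep : ∀ j ∈ Finset.range (m+1), 2⁻¹ * P (A j) ≤ P (A j ∩ C j) := by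
      intro j hj
      have hjm : j ≤ m := by simp only [Finset.mem_range] at hj; omega
      rw [hPAC j hjm, mul_comm]
      exact mul_le_mul_right (hCprob j hjm) _
    refine le_trans (Finset.sum_le_sum hstep) ?_
    have hACdisj : Set.PairwiseDisjoint (Finset.range (m+1) : Set ℕ)
        (fun j => A j ∩ C j) := by
      intro i hi j hj hij
      exact (hdisj hi hj hij).mono inter_subset_left inter_subset_left
    have : ∑ j ∈ Finset.range (m+1), P (A j ∩ C j) =
        P (⋃ j ∈ Finset.range (m+1), (A j ∩ C j)) :=
      (measure_biUnion_finset hACdisj fun j hj => (hAmeas j).inter (hCmeas j)).symm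
    rw [this]
    apply measure_mono
    intro ω hω
    simp only [mem_iUnion, Finset.mem_range, exists_prop] at hω
    obtain ⟨j, hj, ⟨_, hA2⟩, hC1⟩ := hω
    have hjm : j ≤ m := by omega
    have hY : B (u m) ω - B (u j) ω = (B (u m) ω - B 0 ω) - (B (u j) ω - B 0 ω) := by ring
    have habs : a < |B (u m) ω - B 0 ω| := by
      have h5 : |B (u j) ω - B 0 ω| - |B (u m) ω - B (u j) ω| ≤ |B (u m) ω - B 0 ω| := by
        have h6 := abs_sub_abs_le_abs_sub (B (u j) ω - B 0 ω) (B (u j) ω - B (u m) ω)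
        have h7 : (B (u j) ω - B 0 ω) - (B (u j) ω - B (u m) ω) = B (u m) ω - B 0 ω := by ring
        rw [h7] at h6
        have h8 : |B (u j) ω - B (u m) ω| = |B (u m) ω - B (u j) ω| := abs_sub_comm _ _
        linarith [h6, h8.le, h8.ge]
      have hC1' : |B (u m) ω - B (u j) ω| ≤ a := hC1
      linarith
    show ω ∈ {ω | a < |B s ω - B 0 ω|}
    simp only [mem_setOf_eq]
    rwa [hum] at habs
  -- conclude
  have h2 : P {ω | ∃ j ≤ m, 2 * a < |B (u j) ω - B 0 ω|} =
      2 * (2⁻¹ * P {ω | ∃ j ≤ m, 2 * a < |B (u j) ω - B 0 ω|}) := by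
    rw [← mul_assoc, ENNReal.mul_inv_cancel two_ne_zero ENNReal.ofNat_ne_top, one_mul]
  rw [h2]
  exact mul_le_mul_right hchain 2

lemma measure_grid_le (hB : IsBM P B) {e s : ℝ} (he : 0 < e) (hs : 0 ≤ s)
    (hsmall : 3 * s / (e / 4) ^ 2 ≤ 1 / 2) (V : Finset ℝ)
    (hV : ∀ x ∈ V, 0 ≤ x ∧ x ≤ s) :
    P {ω | ∃ x ∈ V, e / 2 < |B x ω - B 0 ω|} ≤
      2 * P {ω | e / 4 < |B s ω - B 0 ω|} := by
  classical
  set W : Finset ℝ := insert 0 (insert s V) with hW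
  have hWmem : ∀ x ∈ W, 0 ≤ x ∧ x ≤ s := by
    intro x hx
    rcases Finset.mem_insert.mp hx with h | h
    · subst h; exact ⟨le_rfl, hs⟩
    rcases Finset.mem_insert.mp h with h | h
    · subst h; exact ⟨hs, le_rfl⟩
    · exact hV x h
  set L : List ℝ := W.sort (· ≤ ·) with hLdef
  have hsorted : L.Pairwise (· ≤ ·) := W.pairwise_sort _
  have hlen : 0 < L.length := by
    rw [hLdef, Finset.length_sort]
    exact Finset.card_pos.mpr ⟨0, Finset.mem_insert_self _ _⟩
  have hmemL : ∀ x : ℝ, x ∈ L ↔ x ∈ W := fun x => Finset.mem_sort _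
  set u : ℕ → ℝ := fun j => L.getD j s with hu
  have hgetmem : ∀ (i : ℕ) (h : i < L.length), L.get ⟨i, h⟩ ∈ W := by
    intro i h
    exact (hmemL _).mp (List.get_mem L ⟨i, h⟩)
  have hget : ∀ (i : ℕ) (h : i < L.length), u i = L.get ⟨i, h⟩ := by
    intro i h
    simp only [hu, List.getD_eq_getElem _ _ h, List.get_eq_getElem]
  have hudef : ∀ (i : ℕ), L.length ≤ i → u i = s := by
    intro i h
    simp only [hu, List.getD_eq_default _ _ h]
  have hubound : ∀ j, 0 ≤ u j ∧ u j ≤ s := by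
    intro j
    by_cases h : j < L.length
    · rw [hget j h]; exact hWmem _ (hgetmem j h)
    · rw [hudef j (le_of_not_gt h)]; exact ⟨hs, le_rfl⟩
  have humono : Monotone u := by
    intro i j hij
    by_cases hj : j < L.length
    · have hi : i < L.length := lt_of_le_of_lt hij hj
      rw [hget i hi, hget j hj]
      exact hsorted.rel_get_of_le (by exact hij)
    · rw [hudef j (le_of_not_gt hj)]
      exact (hubound i).2
  have hu0 : u 0 = 0 := by
    have h0mem : (0:ℝ) ∈ L := (hmemL 0).mpr (Finset.mem_insert_self _ _)
    obtain ⟨k, hk⟩ := List.get_of_mem h0mem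
    have h1 : u 0 ≤ 0 := by
      rw [hget 0 hlen, ← hk]
      exact hsorted.rel_get_of_le (by exact Nat.zero_le _)
    exact le_antisymm h1 (hubound 0).1
  have hum : u (L.length - 1) = s := by
    have hsmem : s ∈ L := (hmemL s).mpr (Finset.mem_insert_of_mem (Finset.mem_insert_self _ _))
    obtain ⟨k, hk⟩ := List.get_of_mem hsmem
    have hlast : L.length - 1 < L.length := by omega
    have h1 : s ≤ u (L.length - 1) := by
      rw [hget _ hlast, ← hk]
      apply hsorted.rel_get_of_le
      have := k.2
      exact (by simp only [Fin.le_def]; omega : k ≤ (⟨L.length - 1, hlast⟩ : Fin L.length))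
    exact le_antisymm (hubound _).2 h1
  have hott := ottaviani hB humono (fun i => (hubound i).1) hu0 hum
    (fun i => (hubound i).2) (by positivity : (0:ℝ) < e / 4) hsmall
  refine le_trans (measure_mono ?_) hott
  intro ω hω
  obtain ⟨x, hxV, hxB⟩ := hω
  have hxW : x ∈ W := Finset.mem_insert_of_mem (Finset.mem_insert_of_mem hxV)
  have hxL : x ∈ L := (hmemL x).mpr hxW
  obtain ⟨k, hk⟩ := List.get_of_mem hxL
  refine ⟨(k : ℕ), by have := k.2; omega, ?_⟩
  rw [hget _ k.2]
  have : L.get ⟨(k : ℕ), k.2⟩ = L.get k := by congr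
  rw [this, hk]
  calc 2 * (e / 4) = e / 2 := by ring
    _ < |B x ω - B 0 ω| := hxB

lemma measure_Q_le (hB : IsBM P B) {e s : ℝ} (he : 0 < e) (hs : 0 ≤ s) :
    P {ω | ∃ q : ℚ, 0 ≤ (q : ℝ) ∧ (q : ℝ) ≤ s ∧ e / 2 < |B (q : ℝ) ω|} ≤
      ENNReal.ofReal (96 * s / e ^ 2) := by
  classical
  by_cases hsmall : 3 * s / (e / 4) ^ 2 ≤ 1 / 2
  · obtain ⟨f, hf⟩ := exists_surjective_nat ℚ
    set G : ℕ → Set Ω := fun n => {ω | ∃ i < n, 0 ≤ ((f i : ℚ) : ℝ) ∧ ((f i : ℚ) : ℝ) ≤ s ∧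
      e / 2 < |B ((f i : ℚ) : ℝ) ω|} with hG
    have hGmono : Monotone G := by
      intro n1 n2 h12 ω hω
      obtain ⟨i, hi, h⟩ := hω
      exact ⟨i, by omega, h⟩
    have hunion : {ω | ∃ q : ℚ, 0 ≤ (q : ℝ) ∧ (q : ℝ) ≤ s ∧ e / 2 < |B (q : ℝ) ω|} =
        ⋃ n, G n := by
      ext ω
      simp only [mem_setOf_eq, mem_iUnion, hG]
      constructor
      · rintro ⟨q, hq⟩
        obtain ⟨i, rfl⟩ := hf q
        exact ⟨i + 1, i, by omega, hq⟩
      · rintro ⟨n, i, _, hq⟩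
        exact ⟨f i, hq⟩
    rw [hunion, (hGmono.directed_le).measure_iUnion]
    refine iSup_le fun n => ?_
    -- the finite grid
    set V : Finset ℝ := ((Finset.range n).image fun i => ((f i : ℚ) : ℝ)).filter
      (fun x => 0 ≤ x ∧ x ≤ s) with hV
    have hVmem : ∀ x ∈ V, 0 ≤ x ∧ x ≤ s := by
      intro x hx
      exact (Finset.mem_filter.mp hx).2
    have hincl : G n ⊆ {ω | ∃ x ∈ V, e / 2 < |B x ω - B 0 ω|} ∪ {ω | B 0 ω ≠ 0} := by
      intro ω hω
      obtain ⟨i, hi, h1, h2, h3⟩ := hω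
      by_cases h0 : B 0 ω = 0
      · left
        refine ⟨((f i : ℚ) : ℝ), ?_, ?_⟩
        · rw [hV]
          refine Finset.mem_filter.mpr ⟨Finset.mem_image.mpr ⟨i, Finset.mem_range.mpr hi, rfl⟩,
            h1, h2⟩
        · rw [h0, sub_zero]; exact h3
      · right; exact h0
    have hnull : P {ω | B 0 ω ≠ 0} = 0 := by
      have := hB.start
      rw [ae_iff] at this
      exact this
    calc P (G n) ≤ P ({ω | ∃ x ∈ V, e / 2 < |B x ω - B 0 ω|} ∪ {ω | B 0 ω ≠ 0}) :=
          measure_mono hincl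
      _ ≤ P {ω | ∃ x ∈ V, e / 2 < |B x ω - B 0 ω|} + P {ω | B 0 ω ≠ 0} := measure_union_le _ _
      _ = P {ω | ∃ x ∈ V, e / 2 < |B x ω - B 0 ω|} := by rw [hnull, add_zero]
      _ ≤ 2 * P {ω | e / 4 < |B s ω - B 0 ω|} := measure_grid_le hB he hs hsmall V hVmem
      _ ≤ 2 * ENNReal.ofReal (3 * (s - 0) / (e / 4) ^ 2) :=
          mul_le_mul_right (incr_cheb hB le_rfl hs (by positivity)) _
      _ ≤ ENNReal.ofReal (96 * s / e ^ 2) := by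
          rw [show (2 : ℝ≥0∞) = ENNReal.ofReal 2 by norm_num,
            ← ENNReal.ofReal_mul (by norm_num)]
          apply ENNReal.ofReal_le_ofReal
          rw [show 3 * (s - 0) / (e / 4) ^ 2 = 48 * s / e ^ 2 by field_simp; ring]
          rw [show 2 * (48 * s / e ^ 2) = 96 * s / e ^ 2 by ring]
  · refine le_trans prob_le_one ?_
    rw [show (1:ℝ≥0∞) = ENNReal.ofReal 1 by simp]
    apply ENNReal.ofReal_le_ofReal
    push_neg at hsmall
    have heq : 3 * s / (e / 4) ^ 2 = 48 * s / e ^ 2 := by field_simp; ring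
    rw [heq] at hsmall
    have he2 : 0 < e ^ 2 := by positivity
    have h96 : 96 * s / e ^ 2 = 2 * (48 * s / e ^ 2) := by ring
    linarith

lemma incr_abs_lintegral (hB : IsBM P B) {t : ℝ} (ht : 0 ≤ t) :
    ∫⁻ ω, ENNReal.ofReal |B t ω - B 0 ω| ∂P ≤ ENNReal.ofReal (2 * Real.sqrt t) := by
  have hmeas : Measurable fun ω => B t ω - B 0 ω := (hB.meas t).sub (hB.meas 0)
  have : ∫⁻ ω, ENNReal.ofReal |B t ω - B 0 ω| ∂P =
      ∫⁻ x, ENNReal.ofReal |x| ∂(P.map fun ω => B t ω - B 0 ω) := by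
    rw [lintegral_map measurable_abs.ennreal_ofReal hmeas]
  rw [this, hB.gauss 0 t le_rfl ht]
  refine le_trans (gauss_abs_bound _) (ENNReal.ofReal_le_ofReal ?_)
  rw [sub_zero, Real.coe_toNNReal _ ht]

lemma ae_unbounded (hB : IsBM P B) : ∀ᵐ ω ∂P, ∀ R : ℝ, ∃ n : ℕ, R < |B (n : ℝ) ω| := by
  have hbad : ∀ R : ℕ, P (⋂ n : ℕ, {ω | |B ((n : ℕ) : ℝ) ω| ≤ (R : ℝ)}) = 0 := by
    intro R
    refine le_antisymm ?_ zero_le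
    have hle : ∀ k : ℕ, P (⋂ n : ℕ, {ω | |B ((n : ℕ) : ℝ) ω| ≤ (R : ℝ)}) ≤
        ENNReal.ofReal ((Real.sqrt (((k:ℝ)+1)^2))⁻¹ * (2 * R)) := by
      intro k
      set n : ℕ := (k + 1) ^ 2 with hn
      have hn1 : (1:ℝ) ≤ (n:ℝ) := by
        rw [hn]; push_cast; nlinarith [Nat.cast_nonneg (α := ℝ) k]
      have hv : ((n:ℝ)).toNNReal ≠ 0 := by
        simp only [ne_eq, Real.toNNReal_eq_zero, not_le]; linarith
      have hincl : (⋂ j : ℕ, {ω | |B ((j : ℕ) : ℝ) ω| ≤ (R : ℝ)}) ⊆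
          {ω | |B ((n : ℕ) : ℝ) ω - B 0 ω| ≤ (R : ℝ)} ∪ {ω | B 0 ω ≠ 0} := by
        intro ω hω
        by_cases h0 : B 0 ω = 0
        · left
          have := mem_iInter.mp hω n
          simp only [mem_setOf_eq] at this ⊢
          rw [h0, sub_zero]; exact this
        · right; exact h0
      have hnull : P {ω | B 0 ω ≠ 0} = 0 := by
        have := hB.start; rw [ae_iff] at this; exact this
      have hmap : P {ω | |B ((n : ℕ) : ℝ) ω - B 0 ω| ≤ (R : ℝ)} =
          (gaussianReal 0 (((n:ℝ) - 0).toNNReal)) {x | |x| ≤ (R:ℝ)} := by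
        rw [← hB.gauss 0 (n : ℝ) le_rfl (by linarith)]
        rw [Measure.map_apply (f := fun ω => B ((n : ℕ) : ℝ) ω - B 0 ω) ((hB.meas _).sub (hB.meas 0))
          (measurableSet_le measurable_abs measurable_const)]
        rfl
      calc P (⋂ j : ℕ, {ω | |B ((j : ℕ) : ℝ) ω| ≤ (R : ℝ)})
          ≤ P ({ω | |B ((n : ℕ) : ℝ) ω - B 0 ω| ≤ (R : ℝ)} ∪ {ω | B 0 ω ≠ 0}) :=
            measure_mono hincl
        _ ≤ P {ω | |B ((n : ℕ) : ℝ) ω - B 0 ω| ≤ (R : ℝ)} + P {ω | B 0 ω ≠ 0} :=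
            measure_union_le _ _
        _ = (gaussianReal 0 (((n:ℝ) - 0).toNNReal)) {x | |x| ≤ (R:ℝ)} := by
            rw [hnull, add_zero, hmap]
        _ ≤ ENNReal.ofReal ((Real.sqrt (2 * Real.pi * (((n:ℝ) - 0).toNNReal : ℝ)))⁻¹ *
            (2 * (R:ℝ))) := by
            apply gauss_interval _ (by positivity)
            rw [sub_zero]; exact hv
        _ ≤ ENNReal.ofReal ((Real.sqrt (((k:ℝ)+1)^2))⁻¹ * (2 * R)) := by
            apply ENNReal.ofReal_le_ofReal
            apply mul_le_mul_of_nonneg_right ?_ (by positivity)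
            apply inv_anti₀
            · positivity
            · apply Real.sqrt_le_sqrt
              rw [sub_zero, Real.coe_toNNReal _ (by linarith)]
              have hpi : (3:ℝ) ≤ Real.pi := by
                have := Real.pi_gt_three; linarith
              have : ((k:ℝ)+1)^2 = (n:ℝ) := by rw [hn]; push_cast; ring
              nlinarith [hn1]
    have htend : Tendsto (fun k : ℕ => ENNReal.ofReal ((Real.sqrt (((k:ℝ)+1)^2))⁻¹ * (2 * R)))
        atTop (nhds 0) := by
      have h1 : ∀ k : ℕ, (Real.sqrt (((k:ℝ)+1)^2))⁻¹ * (2 * R) = (2 * R) * ((k:ℝ)+1)⁻¹ := by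
        intro k
        rw [Real.sqrt_sq (by positivity)]
        ring
      simp only [h1]
      rw [show (0 : ℝ≥0∞) = ENNReal.ofReal 0 by simp]
      apply ENNReal.tendsto_ofReal
      have h2 : Tendsto (fun k : ℕ => ((k:ℝ)+1)⁻¹) atTop (nhds 0) :=
        tendsto_one_div_add_atTop_nhds_zero_nat.congr (by intro k; rw [one_div])
      have := h2.const_mul (2 * (R:ℝ))
      simpa using this
    exact ge_of_tendsto' htend hle
  have hcover : {ω | ¬ ∀ R : ℝ, ∃ n : ℕ, R < |B (n : ℝ) ω|} ⊆
      ⋃ R : ℕ, ⋂ n : ℕ, {ω | |B ((n : ℕ) : ℝ) ω| ≤ (R : ℝ)} := by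
    intro ω hω
    simp only [mem_setOf_eq, not_forall, not_exists, not_lt] at hω
    obtain ⟨R, hR⟩ := hω
    refine mem_iUnion.mpr ⟨⌈R⌉₊, mem_iInter.mpr fun n => ?_⟩
    exact le_trans (hR n) (Nat.le_ceil R)
  rw [ae_iff]
  refine le_antisymm ?_ zero_le
  calc P {ω | ¬ ∀ R : ℝ, ∃ n : ℕ, R < |B (n : ℝ) ω|}
      ≤ P (⋃ R : ℕ, ⋂ n : ℕ, {ω | |B ((n : ℕ) : ℝ) ω| ≤ (R : ℝ)}) := measure_mono hcover
    _ ≤ ∑' R : ℕ, P (⋂ n : ℕ, {ω | |B ((n : ℕ) : ℝ) ω| ≤ (R : ℝ)}) := measure_iUnion_le _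
    _ = 0 := by simp [hbad]

end Ottaviani

section Surrogate

variable {P : Measure Ω} [IsProbabilityMeasure P] {B : ℝ → Ω → ℝ}

/-- Dyadic rational approximation from above. -/
def rapp (j : ℕ) (s : ℝ) : ℝ := (⌈s * 2 ^ j⌉ : ℤ) / 2 ^ j

lemma rapp_ge (j : ℕ) (s : ℝ) : s ≤ rapp j s := by
  rw [rapp, le_div_iff₀ (by positivity : (0:ℝ) < 2 ^ j)]
  exact Int.le_ceil _

lemma rapp_le (j : ℕ) (s : ℝ) : rapp j s ≤ s + ((2:ℝ) ^ j)⁻¹ := by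
  rw [rapp, div_le_iff₀ (by positivity : (0:ℝ) < 2 ^ j)]
  have := Int.ceil_lt_add_one (s * 2 ^ j)
  have h2 : (s + ((2:ℝ) ^ j)⁻¹) * 2 ^ j = s * 2 ^ j + 1 := by
    field_simp
  rw [h2]
  linarith

lemma rapp_tendsto (s : ℝ) : Tendsto (fun j : ℕ => rapp j s) atTop (nhds s) := by
  have hup : Tendsto (fun j : ℕ => s + ((2:ℝ) ^ j)⁻¹) atTop (nhds s) := by
    have h1 : Tendsto (fun j : ℕ => ((2:ℝ) ^ j)⁻¹) atTop (nhds 0) :=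
      tendsto_inv_atTop_zero.comp (tendsto_pow_atTop_atTop_of_one_lt (by norm_num : (1:ℝ) < 2))
    have := tendsto_const_nhds (x := s) (f := atTop (α := ℕ)) |>.add h1
    simpa using this
  exact tendsto_of_tendsto_of_tendsto_of_le_of_le tendsto_const_nhds hup
    (fun j => rapp_ge j s) (fun j => rapp_le j s)

/-- Measurable-in-(s,ω) surrogate for `ofReal |B s ω|`. -/
def Dfun (B : ℝ → Ω → ℝ) (s : ℝ) (ω : Ω) : ℝ≥0∞ :=
  limsup (fun j : ℕ => ENNReal.ofReal |B (rapp j s) ω|) atTop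

/-- Measurable-in-(s,ω) dominating function for `ofReal |walk B e s ω - B s ω|`. -/
def Ffun (B : ℝ → Ω → ℝ) (e s : ℝ) (ω : Ω) : ℝ≥0∞ :=
  (if ∃ q : ℚ, 0 ≤ (q : ℝ) ∧ (q : ℝ) ≤ s ∧ e / 2 < |B (q : ℝ) ω| then ENNReal.ofReal e else 0)
  + min (ENNReal.ofReal e) (Dfun B s ω)

lemma measurable_rapp_term (hmeas : ∀ t, Measurable (B t)) (j : ℕ) :
    Measurable fun p : ℝ × Ω => ENNReal.ofReal |B (rapp j p.1) p.2| := by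
  have hg : Measurable fun q : Ω × ℤ => B ((q.2 : ℝ) / 2 ^ j) q.1 := by
    apply measurable_from_prod_countable_left
    intro z
    show Measurable fun ω : Ω => B ((z : ℝ) / 2 ^ j) ω
    exact hmeas _
  have hcomp : Measurable fun p : ℝ × Ω => (p.2, ⌈p.1 * 2 ^ j⌉) :=
    measurable_snd.prodMk ((measurable_fst.mul_const _).ceil)
  have hm : Measurable fun p : ℝ × Ω => B (rapp j p.1) p.2 := hg.comp hcomp
  exact hm.abs.ennreal_ofReal

lemma measurable_Qset (hmeas : ∀ t, Measurable (B t)) (e : ℝ) :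
    MeasurableSet {p : ℝ × Ω | ∃ q : ℚ, 0 ≤ (q : ℝ) ∧ (q : ℝ) ≤ p.1 ∧ e / 2 < |B (q : ℝ) p.2|} := by
  have : {p : ℝ × Ω | ∃ q : ℚ, 0 ≤ (q : ℝ) ∧ (q : ℝ) ≤ p.1 ∧ e / 2 < |B (q : ℝ) p.2|} =
      ⋃ q : ℚ, {p : ℝ × Ω | 0 ≤ (q : ℝ) ∧ (q : ℝ) ≤ p.1 ∧ e / 2 < |B (q : ℝ) p.2|} := by
    ext p; simp only [mem_setOf_eq, mem_iUnion]
  rw [this]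
  apply MeasurableSet.iUnion
  intro q
  by_cases hq : 0 ≤ (q : ℝ)
  · have : {p : ℝ × Ω | 0 ≤ (q : ℝ) ∧ (q : ℝ) ≤ p.1 ∧ e / 2 < |B (q : ℝ) p.2|} =
        ((fun p : ℝ × Ω => p.1) ⁻¹' Ici (q : ℝ)) ∩
        ((fun p : ℝ × Ω => p.2) ⁻¹' {ω | e / 2 < |B (q : ℝ) ω|}) := by
      ext p
      simp only [mem_setOf_eq, mem_inter_iff, mem_preimage, mem_Ici]
      tauto
    rw [this]
    exact (measurable_fst measurableSet_Ici).inter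
      (measurable_snd (measurableSet_lt measurable_const (hmeas _).abs))
  · have : {p : ℝ × Ω | 0 ≤ (q : ℝ) ∧ (q : ℝ) ≤ p.1 ∧ e / 2 < |B (q : ℝ) p.2|} = ∅ := by
      ext p; simp only [mem_setOf_eq, mem_empty_iff_false, iff_false]; tauto
    rw [this]
    exact MeasurableSet.empty

lemma measurable_Ffun (hmeas : ∀ t, Measurable (B t)) (e : ℝ) :
    Measurable fun p : ℝ × Ω => Ffun B e p.1 p.2 := by
  apply Measurable.add
  · have : (fun p : ℝ × Ω => if ∃ q : ℚ, 0 ≤ (q : ℝ) ∧ (q : ℝ) ≤ p.1 ∧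
        e / 2 < |B (q : ℝ) p.2| then ENNReal.ofReal e else 0) =
        {p : ℝ × Ω | ∃ q : ℚ, 0 ≤ (q : ℝ) ∧ (q : ℝ) ≤ p.1 ∧
          e / 2 < |B (q : ℝ) p.2|}.indicator (fun _ => ENNReal.ofReal e) := by
      funext p
      rw [Set.indicator_apply]
      congr 1
    rw [this]
    exact measurable_const.indicator (measurable_Qset hmeas e)
  · apply Measurable.min measurable_const
    exact Measurable.limsup fun j => measurable_rapp_term hmeas j

lemma Dfun_eq {ω : Ω} (hc : Continuous fun t => B t ω) (s : ℝ) :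
    Dfun B s ω = ENNReal.ofReal |B s ω| := by
  apply Filter.Tendsto.limsup_eq
  have h1 : Tendsto (fun j : ℕ => B (rapp j s) ω) atTop (nhds (B s ω)) :=
    (hc.tendsto s).comp (rapp_tendsto s)
  exact (ENNReal.continuous_ofReal.tendsto _).comp h1.abs

lemma Ffun_pathwise {ω : Ω} {e : ℝ} (hc : Continuous fun t => B t ω) (h0 : B 0 ω = 0)
    (hu : ∀ R : ℝ, ∃ n : ℕ, R < |B (n : ℝ) ω|) (he : 0 < e) {s : ℝ} (hs : 0 ≤ s) :
    ENNReal.ofReal |walk B e s ω - B s ω| ≤ Ffun B e s ω := by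
  rw [Ffun]
  by_cases hQ : ∃ q : ℚ, 0 ≤ (q : ℝ) ∧ (q : ℝ) ≤ s ∧ e / 2 < |B (q : ℝ) ω|
  · rw [if_pos hQ]
    refine le_trans ?_ le_self_add
    exact ENNReal.ofReal_le_ofReal (walk_dist hc h0 hu he hs)
  · rw [if_neg hQ, zero_add]
    push_neg at hQ
    obtain ⟨hw0, hbs⟩ := walk_zero_of_small hc h0 hu he hs (by linarith : e / 2 < e) hQ
    rw [hw0, zero_sub, abs_neg, Dfun_eq hc s]
    rw [min_def]
    split_ifs with hmin
    · exact le_trans (ENNReal.ofReal_le_ofReal (by linarith)) le_rfl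
    · exact le_rfl

lemma Ffun_expectation (hB : IsBM P B) {e : ℝ} (he : 0 < e) {s : ℝ} (hs : 0 ≤ s) :
    ∫⁻ ω, Ffun B e s ω ∂P ≤ ENNReal.ofReal (98 * min e (Real.sqrt s)) := by
  have hQmeas : MeasurableSet {ω : Ω | ∃ q : ℚ, 0 ≤ (q : ℝ) ∧ (q : ℝ) ≤ s ∧
      e / 2 < |B (q : ℝ) ω|} := by
    have : {ω : Ω | ∃ q : ℚ, 0 ≤ (q : ℝ) ∧ (q : ℝ) ≤ s ∧ e / 2 < |B (q : ℝ) ω|} =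
        ⋃ q : ℚ, {ω : Ω | 0 ≤ (q : ℝ) ∧ (q : ℝ) ≤ s ∧ e / 2 < |B (q : ℝ) ω|} := by
      ext ω; simp only [mem_setOf_eq, mem_iUnion]
    rw [this]
    refine MeasurableSet.iUnion fun q => ?_
    by_cases hq : 0 ≤ (q : ℝ) ∧ (q : ℝ) ≤ s
    · have : {ω : Ω | 0 ≤ (q : ℝ) ∧ (q : ℝ) ≤ s ∧ e / 2 < |B (q : ℝ) ω|} =
          {ω : Ω | e / 2 < |B (q : ℝ) ω|} := by
        ext ω; simp only [mem_setOf_eq]; tauto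
      rw [this]
      exact measurableSet_lt measurable_const (hB.meas _).abs
    · have : {ω : Ω | 0 ≤ (q : ℝ) ∧ (q : ℝ) ≤ s ∧ e / 2 < |B (q : ℝ) ω|} = ∅ := by
        ext ω; simp only [mem_setOf_eq, mem_empty_iff_false, iff_false]; tauto
      rw [this]
      exact MeasurableSet.empty
  have hsplit : ∫⁻ ω, Ffun B e s ω ∂P =
      (∫⁻ ω, (if ∃ q : ℚ, 0 ≤ (q : ℝ) ∧ (q : ℝ) ≤ s ∧ e / 2 < |B (q : ℝ) ω|
        then ENNReal.ofReal e else 0) ∂P) +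
      ∫⁻ ω, min (ENNReal.ofReal e) (Dfun B s ω) ∂P := by
    rw [← lintegral_add_right]
    · rfl
    · exact Measurable.min measurable_const
        (Measurable.limsup fun j => ((hB.meas _).abs.ennreal_ofReal))
  rw [hsplit]
  have hterm1 : (∫⁻ ω, (if ∃ q : ℚ, 0 ≤ (q : ℝ) ∧ (q : ℝ) ≤ s ∧ e / 2 < |B (q : ℝ) ω|
      then ENNReal.ofReal e else 0) ∂P) ≤ ENNReal.ofReal (96 * min e (Real.sqrt s)) := by
    have hind : (fun ω : Ω => (if ∃ q : ℚ, 0 ≤ (q : ℝ) ∧ (q : ℝ) ≤ s ∧ e / 2 < |B (q : ℝ) ω|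
        then ENNReal.ofReal e else 0)) =
        {ω : Ω | ∃ q : ℚ, 0 ≤ (q : ℝ) ∧ (q : ℝ) ≤ s ∧
          e / 2 < |B (q : ℝ) ω|}.indicator (fun _ => ENNReal.ofReal e) := by
      funext ω
      rw [Set.indicator_apply]
      congr 1
    rw [hind, lintegral_indicator_const hQmeas]
    rcases le_or_gt (Real.sqrt s) e with hcase | hcase
    · calc ENNReal.ofReal e * P {ω : Ω | ∃ q : ℚ, 0 ≤ (q : ℝ) ∧ (q : ℝ) ≤ s ∧
            e / 2 < |B (q : ℝ) ω|}
          ≤ ENNReal.ofReal e * ENNReal.ofReal (96 * s / e ^ 2) :=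
            mul_le_mul_right (measure_Q_le hB he hs) _
        _ = ENNReal.ofReal (e * (96 * s / e ^ 2)) := by
            rw [← ENNReal.ofReal_mul (le_of_lt he)]
        _ ≤ ENNReal.ofReal (96 * min e (Real.sqrt s)) := by
            apply ENNReal.ofReal_le_ofReal
            rw [min_eq_right hcase]
            have hss : Real.sqrt s * Real.sqrt s = s := Real.mul_self_sqrt hs
            have h1 : e * (96 * s / e ^ 2) = 96 * s / e := by field_simp
            rw [h1]
            rw [div_le_iff₀ he]
            nlinarith [Real.sqrt_nonneg s]
    · calc ENNReal.ofReal e * P {ω : Ω | ∃ q : ℚ, 0 ≤ (q : ℝ) ∧ (q : ℝ) ≤ s ∧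
            e / 2 < |B (q : ℝ) ω|}
          ≤ ENNReal.ofReal e * 1 := mul_le_mul_right prob_le_one _
        _ = ENNReal.ofReal e := by rw [mul_one]
        _ ≤ ENNReal.ofReal (96 * min e (Real.sqrt s)) := by
            apply ENNReal.ofReal_le_ofReal
            rw [min_eq_left (le_of_lt hcase)]
            linarith
  have hterm2 : ∫⁻ ω, min (ENNReal.ofReal e) (Dfun B s ω) ∂P ≤
      ENNReal.ofReal (2 * min e (Real.sqrt s)) := by
    have hb1 : ∫⁻ ω, min (ENNReal.ofReal e) (Dfun B s ω) ∂P ≤ ENNReal.ofReal e := by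
      calc ∫⁻ ω, min (ENNReal.ofReal e) (Dfun B s ω) ∂P
          ≤ ∫⁻ _, ENNReal.ofReal e ∂P := lintegral_mono fun ω => min_le_left _ _
        _ = ENNReal.ofReal e := by rw [lintegral_const, measure_univ, mul_one]
    have hb2 : ∫⁻ ω, min (ENNReal.ofReal e) (Dfun B s ω) ∂P ≤
        ENNReal.ofReal (2 * Real.sqrt s) := by
      have hae : ∀ᵐ ω ∂P, min (ENNReal.ofReal e) (Dfun B s ω) ≤
          ENNReal.ofReal |B s ω - B 0 ω| := by
        filter_upwards [hB.cont, hB.start] with ω hc h0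
        rw [Dfun_eq hc s, h0, sub_zero]
        exact min_le_right _ _
      calc ∫⁻ ω, min (ENNReal.ofReal e) (Dfun B s ω) ∂P
          ≤ ∫⁻ ω, ENNReal.ofReal |B s ω - B 0 ω| ∂P := lintegral_mono_ae hae
        _ ≤ ENNReal.ofReal (2 * Real.sqrt s) := incr_abs_lintegral hB hs
    rcases le_total e (Real.sqrt s) with hcase | hcase
    · refine le_trans hb1 (ENNReal.ofReal_le_ofReal ?_)
      rw [min_eq_left hcase]; linarith
    · refine le_trans hb2 (ENNReal.ofReal_le_ofReal ?_)
      rw [min_eq_right hcase]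
  calc (∫⁻ ω, (if ∃ q : ℚ, 0 ≤ (q : ℝ) ∧ (q : ℝ) ≤ s ∧ e / 2 < |B (q : ℝ) ω|
        then ENNReal.ofReal e else 0) ∂P) +
      ∫⁻ ω, min (ENNReal.ofReal e) (Dfun B s ω) ∂P
      ≤ ENNReal.ofReal (96 * min e (Real.sqrt s)) + ENNReal.ofReal (2 * min e (Real.sqrt s)) :=
        add_le_add hterm1 hterm2
    _ = ENNReal.ofReal (98 * min e (Real.sqrt s)) := by
        rw [← ENNReal.ofReal_add]
        · congr 1; ring
        · have h1 : (0:ℝ) ≤ min e (Real.sqrt s) :=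
            le_min (le_of_lt he) (Real.sqrt_nonneg s)
          positivity
        · have h1 : (0:ℝ) ≤ min e (Real.sqrt s) :=
            le_min (le_of_lt he) (Real.sqrt_nonneg s)
          positivity

end Surrogate

section Kernel

lemma rho2_nonneg {H tb s : ℝ} (hs : 0 ≤ s) (hstb : s ≤ tb) : 0 ≤ rho2 H tb s := by
  apply mul_nonneg (Real.rpow_nonneg hs _)
  apply intervalIntegral.integral_nonneg hstb
  intro u hu
  exact mul_nonneg (Real.rpow_nonneg (le_trans hs hu.1) _)
    (Real.rpow_nonneg (by linarith [hu.1] : (0:ℝ) ≤ u - s) _)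

lemma rho2_le {H T tb s : ℝ} (hH1 : 1 / 2 < H) (hH2 : H < 1) (hs : 0 < s) (hstb : s ≤ tb)
    (htbT : tb ≤ T) :
    rho2 H tb s ≤ T ^ (2 * H - 1) / (2 * H - 1) * s ^ (-H - 1 / 2) := by
  have htb0 : 0 < tb := lt_of_lt_of_le hs hstb
  have hf_cont : ContinuousOn (fun u : ℝ => u ^ (H - 3 / 2) * (u - s) ^ (H - 1 / 2))
      (Icc s tb) := by
    intro u hu
    apply ContinuousWithinAt.mul
    · exact (continuousAt_id.rpow_const
        (Or.inl (by linarith [hu.1] : u ≠ 0))).continuousWithinAt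
    · exact ((continuousAt_id.sub continuousAt_const).rpow_const
        (Or.inr (by linarith : (0:ℝ) ≤ H - 1 / 2))).continuousWithinAt
  have hg_cont : ContinuousOn (fun u : ℝ => u ^ (2 * H - 2)) (Icc s tb) := by
    intro u hu
    exact (continuousAt_id.rpow_const
      (Or.inl (by linarith [hu.1] : u ≠ 0))).continuousWithinAt
  have hf_int : IntervalIntegrable (fun u : ℝ => u ^ (H - 3 / 2) * (u - s) ^ (H - 1 / 2))
      volume s tb := by
    apply ContinuousOn.intervalIntegrable
    rwa [uIcc_of_le hstb]
  have hg_int : IntervalIntegrable (fun u : ℝ => u ^ (2 * H - 2)) volume s tb := by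
    apply ContinuousOn.intervalIntegrable
    rwa [uIcc_of_le hstb]
  have hmono : ∀ u ∈ Icc s tb, u ^ (H - 3 / 2) * (u - s) ^ (H - 1 / 2) ≤ u ^ (2 * H - 2) := by
    intro u hu
    have hu0 : 0 < u := lt_of_lt_of_le hs hu.1
    have h1 : (u - s) ^ (H - 1 / 2) ≤ u ^ (H - 1 / 2) :=
      Real.rpow_le_rpow (by linarith [hu.1]) (by linarith) (by linarith)
    calc u ^ (H - 3 / 2) * (u - s) ^ (H - 1 / 2) ≤ u ^ (H - 3 / 2) * u ^ (H - 1 / 2) :=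
          mul_le_mul_of_nonneg_left h1 (Real.rpow_nonneg (le_of_lt hu0) _)
      _ = u ^ (2 * H - 2) := by
          rw [← Real.rpow_add hu0]
          congr 1
          ring
  have hI : (∫ u in s..tb, u ^ (H - 3 / 2) * (u - s) ^ (H - 1 / 2)) ≤
      ∫ u in s..tb, u ^ (2 * H - 2) :=
    intervalIntegral.integral_mono_on hstb hf_int hg_int hmono
  have hval : (∫ u in s..tb, u ^ (2 * H - 2)) = (tb ^ (2 * H - 1) - s ^ (2 * H - 1)) /
      (2 * H - 1) := by
    rw [integral_rpow (Or.inl (by linarith : (-1:ℝ) < 2 * H - 2))]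
    have h1 : 2 * H - 2 + 1 = 2 * H - 1 := by ring
    rw [h1]
  have hIT : (∫ u in s..tb, u ^ (H - 3 / 2) * (u - s) ^ (H - 1 / 2)) ≤
      T ^ (2 * H - 1) / (2 * H - 1) := by
    refine le_trans hI ?_
    rw [hval]
    apply div_le_div_of_nonneg_right ?_ (by linarith : (0:ℝ) ≤ 2 * H - 1)
    have h2 : tb ^ (2 * H - 1) ≤ T ^ (2 * H - 1) :=
      Real.rpow_le_rpow (le_of_lt htb0) htbT (by linarith)
    have h3 : 0 ≤ s ^ (2 * H - 1) := Real.rpow_nonneg (le_of_lt hs) _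
    linarith
  rw [rho2, mul_comm (T ^ (2 * H - 1) / (2 * H - 1)) (s ^ (-H - 1 / 2))]
  exact mul_le_mul_of_nonneg_left hIT (Real.rpow_nonneg (le_of_lt hs) _)

lemma kernel_int_low {H e : ℝ} (hH1 : 1 / 2 < H) (hH2 : H < 1) (he : 0 < e) {τ : ℝ}
    (hτ0 : 0 < τ) (hτe : τ ≤ e ^ 2) :
    ∫⁻ s in Ioc (0:ℝ) τ, ENNReal.ofReal (s ^ (-H - 1 / 2) * (98 * min e (Real.sqrt s))) ≤
      ENNReal.ofReal (98 / (1 - H) * e ^ (2 - 2 * H)) := by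
  have hpt : ∀ s ∈ Ioc (0:ℝ) τ,
      ENNReal.ofReal (s ^ (-H - 1 / 2) * (98 * min e (Real.sqrt s))) ≤
      ENNReal.ofReal (98 * s ^ (-H)) := by
    intro s hs
    apply ENNReal.ofReal_le_ofReal
    have hs0 : 0 < s := hs.1
    have h1 : min e (Real.sqrt s) ≤ Real.sqrt s := min_le_right _ _
    have h2 : s ^ (-H - 1 / 2) * Real.sqrt s = s ^ (-H) := by
      rw [Real.sqrt_eq_rpow, ← Real.rpow_add hs0]
      congr 1
      ring
    calc s ^ (-H - 1 / 2) * (98 * min e (Real.sqrt s))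
        ≤ s ^ (-H - 1 / 2) * (98 * Real.sqrt s) := by
          apply mul_le_mul_of_nonneg_left ?_ (Real.rpow_nonneg (le_of_lt hs0) _)
          linarith
      _ = 98 * (s ^ (-H - 1 / 2) * Real.sqrt s) := by ring
      _ = 98 * s ^ (-H) := by rw [h2]
  have hint : IntegrableOn (fun s : ℝ => 98 * s ^ (-H)) (Ioc 0 τ) volume := by
    have h1 : IntervalIntegrable (fun s : ℝ => s ^ (-H)) volume 0 τ :=
      intervalIntegral.intervalIntegrable_rpow' (by linarith)
    rw [intervalIntegrable_iff_integrableOn_Ioc_of_le (le_of_lt hτ0)] at h1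
    exact h1.const_mul 98
  calc ∫⁻ s in Ioc (0:ℝ) τ, ENNReal.ofReal (s ^ (-H - 1 / 2) * (98 * min e (Real.sqrt s)))
      ≤ ∫⁻ s in Ioc (0:ℝ) τ, ENNReal.ofReal (98 * s ^ (-H)) := by
        apply lintegral_mono_ae
        rw [ae_restrict_iff' measurableSet_Ioc]
        exact ae_of_all _ hpt
    _ = ENNReal.ofReal (∫ s in Ioc (0:ℝ) τ, 98 * s ^ (-H)) := by
        rw [ofReal_integral_eq_lintegral_ofReal hint]
        refine (ae_restrict_iff' measurableSet_Ioc).mpr (ae_of_all _ fun s hs => ?_)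
        have hs0 : (0:ℝ) < s := hs.1
        have : (0:ℝ) ≤ 98 * s ^ (-H) := by positivity
        simpa using this
    _ ≤ ENNReal.ofReal (98 / (1 - H) * e ^ (2 - 2 * H)) := by
        apply ENNReal.ofReal_le_ofReal
        rw [← intervalIntegral.integral_of_le (le_of_lt hτ0)]
        rw [intervalIntegral.integral_const_mul]
        rw [integral_rpow (Or.inl (by linarith : (-1:ℝ) < -H))]
        rw [Real.zero_rpow (by intro h; linarith : -H + 1 ≠ 0)]
        have hτval : (τ ^ (-H + 1) - 0) / (-H + 1) ≤ (e ^ 2) ^ (-H + 1) / (-H + 1) := by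
          apply div_le_div_of_nonneg_right ?_ (by linarith : (0:ℝ) ≤ -H + 1)
          rw [sub_zero]
          exact Real.rpow_le_rpow (le_of_lt hτ0) hτe (by linarith)
        have hee : (e ^ 2 : ℝ) ^ (-H + 1) = e ^ (2 - 2 * H) := by
          rw [← Real.rpow_natCast e 2, ← Real.rpow_mul (le_of_lt he)]
          congr 1
          push_cast
          ring
        calc 98 * ((τ ^ (-H + 1) - 0) / (-H + 1)) ≤ 98 * ((e ^ 2) ^ (-H + 1) / (-H + 1)) := by
              linarith
          _ = 98 / (1 - H) * e ^ (2 - 2 * H) := by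
              rw [hee]
              have : -H + 1 = 1 - H := by ring
              rw [this]
              ring

lemma kernel_int_high {H T e : ℝ} (hH1 : 1 / 2 < H) (hH2 : H < 1) (he : 0 < e)
    (heT : e ^ 2 < T) :
    ∫⁻ s in Ioc (e ^ 2) T, ENNReal.ofReal (s ^ (-H - 1 / 2) * (98 * min e (Real.sqrt s))) ≤
      ENNReal.ofReal (98 / (H - 1 / 2) * e ^ (2 - 2 * H)) := by
  have he2 : (0:ℝ) < e ^ 2 := by positivity
  have hpt : ∀ s ∈ Ioc (e ^ 2) T,
      ENNReal.ofReal (s ^ (-H - 1 / 2) * (98 * min e (Real.sqrt s))) ≤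
      ENNReal.ofReal (98 * e * s ^ (-H - 1 / 2)) := by
    intro s hs
    apply ENNReal.ofReal_le_ofReal
    have hs0 : 0 < s := lt_trans he2 hs.1
    calc s ^ (-H - 1 / 2) * (98 * min e (Real.sqrt s))
        ≤ s ^ (-H - 1 / 2) * (98 * e) := by
          apply mul_le_mul_of_nonneg_left ?_ (Real.rpow_nonneg (le_of_lt hs0) _)
          have := min_le_left e (Real.sqrt s)
          linarith
      _ = 98 * e * s ^ (-H - 1 / 2) := by ring
  have hcont : ContinuousOn (fun s : ℝ => s ^ (-H - 1 / 2)) (Icc (e ^ 2) T) := by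
    intro u hu
    exact (continuousAt_id.rpow_const
      (Or.inl (by nlinarith [hu.1] : u ≠ 0))).continuousWithinAt
  have hint0 : IntervalIntegrable (fun s : ℝ => s ^ (-H - 1 / 2)) volume (e ^ 2) T := by
    apply ContinuousOn.intervalIntegrable
    rwa [uIcc_of_le (le_of_lt heT)]
  have hint : IntegrableOn (fun s : ℝ => 98 * e * s ^ (-H - 1 / 2)) (Ioc (e ^ 2) T) volume := by
    have h1 := hint0
    rw [intervalIntegrable_iff_integrableOn_Ioc_of_le (le_of_lt heT)] at h1
    exact h1.const_mul (98 * e)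
  calc ∫⁻ s in Ioc (e ^ 2) T, ENNReal.ofReal (s ^ (-H - 1 / 2) * (98 * min e (Real.sqrt s)))
      ≤ ∫⁻ s in Ioc (e ^ 2) T, ENNReal.ofReal (98 * e * s ^ (-H - 1 / 2)) := by
        apply lintegral_mono_ae
        rw [ae_restrict_iff' measurableSet_Ioc]
        exact ae_of_all _ hpt
    _ = ENNReal.ofReal (∫ s in Ioc (e ^ 2) T, 98 * e * s ^ (-H - 1 / 2)) := by
        rw [ofReal_integral_eq_lintegral_ofReal hint]
        refine (ae_restrict_iff' measurableSet_Ioc).mpr (ae_of_all _ fun s hs => ?_)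
        have hs0 : (0:ℝ) < s := lt_trans he2 hs.1
        have : (0:ℝ) ≤ 98 * e * s ^ (-H - 1 / 2) := by positivity
        simpa using this
    _ ≤ ENNReal.ofReal (98 / (H - 1 / 2) * e ^ (2 - 2 * H)) := by
        apply ENNReal.ofReal_le_ofReal
        rw [← intervalIntegral.integral_of_le (le_of_lt heT)]
        rw [intervalIntegral.integral_const_mul]
        rw [integral_rpow (Or.inr ⟨by intro h; rw [show (-H - 1/2 : ℝ) = -1 ↔ H = 1/2 by
            constructor <;> intro hh <;> linarith] at h; linarith,
          by rw [uIcc_of_le (le_of_lt heT)]; intro hmem; exact absurd hmem.1 (not_le.mpr he2)⟩)]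
        have hexp : -H - 1 / 2 + 1 = 1 / 2 - H := by ring
        rw [hexp]
        have hTnn : (0:ℝ) ≤ T ^ (1 / 2 - H) :=
          Real.rpow_nonneg (by nlinarith : (0:ℝ) ≤ T) _
        have he21 : (e ^ 2 : ℝ) ^ (1 / 2 - H) = e ^ (1 - 2 * H) := by
          rw [← Real.rpow_natCast e 2, ← Real.rpow_mul (le_of_lt he)]
          congr 1
          push_cast
          ring
        have hkey : (T ^ (1 / 2 - H) - (e ^ 2) ^ (1 / 2 - H)) / (1 / 2 - H) ≤
            e ^ (1 - 2 * H) / (H - 1 / 2) := by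
          rw [show (T ^ (1/2 - H) - (e^2) ^ (1/2 - H)) / (1/2 - H) =
            ((e^2) ^ (1/2 - H) - T ^ (1/2 - H)) / (H - 1/2) by
              rw [div_eq_div_iff (by linarith) (by linarith)]
              ring]
          apply div_le_div_of_nonneg_right ?_ (by linarith : (0:ℝ) ≤ H - 1 / 2)
          rw [he21]
          linarith
        calc 98 * e * ((T ^ (1 / 2 - H) - (e ^ 2) ^ (1 / 2 - H)) / (1 / 2 - H))
            ≤ 98 * e * (e ^ (1 - 2 * H) / (H - 1 / 2)) := by
              apply mul_le_mul_of_nonneg_left hkey (by positivity)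
          _ = 98 / (H - 1 / 2) * (e * e ^ (1 - 2 * H)) := by ring
          _ = 98 / (H - 1 / 2) * e ^ (2 - 2 * H) := by
              congr 1
              rw [show (e : ℝ) * e ^ (1 - 2 * H) = e ^ (1:ℝ) * e ^ (1 - 2 * H) by
                rw [Real.rpow_one]]
              rw [← Real.rpow_add he]
              congr 1
              ring

lemma kernel_integral {H T e : ℝ} (hH1 : 1 / 2 < H) (hH2 : H < 1) (hT : 0 < T) (he : 0 < e) :
    ∫⁻ s in Ioc (0:ℝ) T, ENNReal.ofReal (s ^ (-H - 1 / 2) * (98 * min e (Real.sqrt s))) ≤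
      ENNReal.ofReal (98 * (1 / (1 - H) + 1 / (H - 1 / 2)) * e ^ (2 - 2 * H)) := by
  have henn : (0:ℝ) ≤ e ^ (2 - 2*H) := Real.rpow_nonneg (le_of_lt he) _
  have hsum : 98 * (1 / (1 - H) + 1 / (H - 1 / 2)) * e ^ (2 - 2 * H) =
      98 / (1 - H) * e ^ (2 - 2 * H) + 98 / (H - 1 / 2) * e ^ (2 - 2 * H) := by ring
  rcases le_or_gt T (e ^ 2) with hTe | hTe
  · refine le_trans (kernel_int_low hH1 hH2 he hT hTe) (ENNReal.ofReal_le_ofReal ?_)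
    rw [hsum]
    have : 0 ≤ 98 / (H - 1 / 2) * e ^ (2 - 2 * H) := by
      apply mul_nonneg ?_ henn
      apply div_nonneg (by norm_num) (by linarith)
    linarith
  · have hde : Ioc (0:ℝ) T = Ioc 0 (e ^ 2) ∪ Ioc (e ^ 2) T :=
      (Set.Ioc_union_Ioc_eq_Ioc (by positivity) (le_of_lt hTe)).symm
    rw [hde, lintegral_union measurableSet_Ioc (Set.Ioc_disjoint_Ioc_of_le le_rfl)]
    refine le_trans (add_le_add (kernel_int_low hH1 hH2 he (by positivity) le_rfl)
      (kernel_int_high hH1 hH2 he hTe)) ?_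
    have h1 : (0:ℝ) ≤ 98 / (1 - H) * e ^ (2 - 2 * H) :=
      mul_nonneg (div_nonneg (by norm_num) (by linarith)) henn
    have h2 : (0:ℝ) ≤ 98 / (H - 1 / 2) * e ^ (2 - 2 * H) :=
      mul_nonneg (div_nonneg (by norm_num) (by linarith)) henn
    rw [← ENNReal.ofReal_add h1 h2]
    apply ENNReal.ofReal_le_ofReal
    rw [hsum]

end Kernel

/-- For `1/2 < H < 1` and `H − 1/2 < λ < 1/2` there is a constant `C`,
depending only on `H`, `T` and `λ`, such that
`E[sup_{0≤t≤T} ∫_0^{t̄_k} ρ_{H,2}(t̄_k,s)|A^k(s) − B(s)| ds] ≤ C ε_k^{1−2λ}` for all `k`. -/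
theorem rho2_error_bound
    (P : Measure Ω) [IsProbabilityMeasure P] (B : ℝ → Ω → ℝ) (hB : IsBM P B)
    (ε : ℕ → ℝ) (hε : ∀ k, 0 < ε k) (hsum : Summable fun k => ε k ^ 2)
    (T : ℝ) (hT : 0 < T) (H lam : ℝ) (hH1 : 1 / 2 < H) (hH2 : H < 1)
    (hlam1 : H - 1 / 2 < lam) (hlam2 : lam < 1 / 2) :
    ∃ C : ℝ, 0 ≤ C ∧ ∀ k : ℕ, 1 ≤ k →
      ∫ ω, (⨆ t : Icc (0 : ℝ) T,
          ∫ s in (0 : ℝ)..(lastT B (ε k) (↑t) ω),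
            rho2 H (lastT B (ε k) (↑t) ω) s * |walk B (ε k) s ω - B s ω|) ∂P ≤
        C * ε k ^ (1 - 2 * lam) := by
  classical
  -- a uniform bound on the sequence ε
  obtain ⟨K0, hK0⟩ : ∃ K0 : ℕ, ∀ k ≥ K0, ε k ^ 2 ≤ 1 := by
    have h1 : ∀ᶠ k in atTop, ε k ^ 2 ≤ 1 :=
      hsum.tendsto_atTop_zero.eventually (eventually_le_nhds (by norm_num : (0:ℝ) < 1))
    exact Filter.eventually_atTop.mp h1
  set M : ℝ := 1 + ∑ j ∈ Finset.range K0, ε j with hM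
  have hM1 : 1 ≤ M := by
    have : 0 ≤ ∑ j ∈ Finset.range K0, ε j :=
      Finset.sum_nonneg fun j _ => le_of_lt (hε j)
    rw [hM]; linarith
  have hMb : ∀ k, ε k ≤ M := by
    intro k
    rcases lt_or_ge k K0 with hk | hk
    · have h1 : ε k ≤ ∑ j ∈ Finset.range K0, ε j :=
        Finset.single_le_sum (fun j _ => le_of_lt (hε j)) (Finset.mem_range.mpr hk)
      rw [hM]; linarith
    · have h1 := hK0 k hk
      have h2 : ε k ≤ 1 := by nlinarith [hε k]
      linarith
  -- constants
  set K : ℝ := T ^ (2 * H - 1) / (2 * H - 1) with hK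
  have hK0' : 0 ≤ K := by
    rw [hK]
    exact div_nonneg (Real.rpow_nonneg (le_of_lt hT) _) (by linarith)
  set cH : ℝ := 1 / (1 - H) + 1 / (H - 1 / 2) with hcH
  have hcH0 : 0 ≤ cH := by
    rw [hcH]
    have h1 : (0:ℝ) ≤ 1 / (1 - H) := div_nonneg one_pos.le (by linarith)
    have h2 : (0:ℝ) ≤ 1 / (H - 1 / 2) := div_nonneg one_pos.le (by linarith)
    linarith
  set C : ℝ := K * (98 * cH) * M ^ (2 * lam + 1 - 2 * H) with hC
  have hC0 : 0 ≤ C := by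
    rw [hC]
    apply mul_nonneg (mul_nonneg hK0' (by linarith))
    exact Real.rpow_nonneg (by linarith) _
  refine ⟨C, hC0, fun k _ => ?_⟩
  set e : ℝ := ε k with he_def
  have he : 0 < e := hε k
  have heM : e ≤ M := hMb k
  -- the ω-wise dominating lintegral
  set LL : Ω → ℝ≥0∞ := fun ω => ∫⁻ s in Ioc (0:ℝ) T,
    ENNReal.ofReal (K * Real.exp (Real.log s * (-H - 1 / 2))) * Ffun B e s ω with hLL
  have hjm : Measurable fun p : ℝ × Ω =>
      ENNReal.ofReal (K * Real.exp (Real.log p.1 * (-H - 1 / 2))) * Ffun B e p.1 p.2 := by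
    apply Measurable.mul
    · apply Measurable.ennreal_ofReal
      exact (((Real.measurable_log.comp measurable_fst).mul_const _).exp).const_mul K
    · exact measurable_Ffun hB.meas e
  have hLLmeas : Measurable LL := by
    rw [hLL]
    exact Measurable.lintegral_prod_left' hjm
  -- expectation of LL
  have hexp : ∫⁻ ω, LL ω ∂P ≤
      ENNReal.ofReal K * ENNReal.ofReal (98 * cH * e ^ (2 - 2 * H)) := by
    have hswap : ∫⁻ ω, LL ω ∂P =
        ∫⁻ s in Ioc (0:ℝ) T, ∫⁻ ω, ENNReal.ofReal (K * Real.exp (Real.log s * (-H - 1 / 2))) *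
          Ffun B e s ω ∂P ∂volume := by
      rw [hLL]
      exact lintegral_lintegral_swap ((hjm.comp measurable_swap).aemeasurable)
    rw [hswap]
    have hstep : ∀ s ∈ Ioc (0:ℝ) T,
        (∫⁻ ω, ENNReal.ofReal (K * Real.exp (Real.log s * (-H - 1 / 2))) * Ffun B e s ω ∂P) ≤
        ENNReal.ofReal K * ENNReal.ofReal (s ^ (-H - 1 / 2) * (98 * min e (Real.sqrt s))) := by
      intro s hs
      have hwe : Real.exp (Real.log s * (-H - 1 / 2)) = s ^ (-H - 1 / 2) :=
        (Real.rpow_def_of_pos hs.1 _).symm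
      simp only [hwe]
      rw [lintegral_const_mul' _ _ ENNReal.ofReal_ne_top]
      have h1 : ENNReal.ofReal (K * s ^ (-H - 1 / 2)) =
          ENNReal.ofReal K * ENNReal.ofReal (s ^ (-H - 1 / 2)) :=
        ENNReal.ofReal_mul hK0'
      rw [h1, mul_assoc]
      apply mul_le_mul_right
      rw [ENNReal.ofReal_mul (Real.rpow_nonneg (le_of_lt hs.1) _)]
      exact mul_le_mul_right (Ffun_expectation hB he (le_of_lt hs.1)) _
    calc ∫⁻ s in Ioc (0:ℝ) T, ∫⁻ ω, ENNReal.ofReal (K * Real.exp (Real.log s * (-H - 1 / 2))) *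
          Ffun B e s ω ∂P ∂volume
        ≤ ∫⁻ s in Ioc (0:ℝ) T, ENNReal.ofReal K *
            ENNReal.ofReal (s ^ (-H - 1 / 2) * (98 * min e (Real.sqrt s))) ∂volume := by
          apply lintegral_mono_ae
          exact (ae_restrict_iff' measurableSet_Ioc).mpr (ae_of_all _ hstep)
      _ = ENNReal.ofReal K * ∫⁻ s in Ioc (0:ℝ) T,
            ENNReal.ofReal (s ^ (-H - 1 / 2) * (98 * min e (Real.sqrt s))) ∂volume :=
          lintegral_const_mul' _ _ ENNReal.ofReal_ne_top
      _ ≤ ENNReal.ofReal K * ENNReal.ofReal (98 * cH * e ^ (2 - 2 * H)) := by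
          apply mul_le_mul_right
          have hki := kernel_integral (e := e) hH1 hH2 hT he
          refine le_trans hki (ENNReal.ofReal_le_ofReal ?_)
          rw [hcH]
  have hRHSne : ENNReal.ofReal K * ENNReal.ofReal (98 * cH * e ^ (2 - 2 * H)) ≠ ⊤ :=
    ENNReal.mul_ne_top ENNReal.ofReal_ne_top ENNReal.ofReal_ne_top
  have hfin : ∀ᵐ ω ∂P, LL ω < ⊤ := ae_lt_top hLLmeas (ne_top_of_le_ne_top hRHSne hexp)
  -- pathwise domination
  have hdom : ∀ᵐ ω ∂P, ENNReal.ofReal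
      (⨆ t : Icc (0:ℝ) T, ∫ s in (0:ℝ)..(lastT B e (↑t) ω),
        rho2 H (lastT B e (↑t) ω) s * |walk B e s ω - B s ω|) ≤ LL ω := by
    filter_upwards [hB.cont, hB.start, ae_unbounded hB, hfin] with ω hc h0 hu hfinw
    haveI hne : Nonempty (Icc (0:ℝ) T) := ⟨⟨0, left_mem_Icc.mpr (le_of_lt hT)⟩⟩
    have hbound : ∀ t : Icc (0:ℝ) T,
        (∫ s in (0:ℝ)..(lastT B e (↑t) ω),
          rho2 H (lastT B e (↑t) ω) s * |walk B e s ω - B s ω|) ≤ (LL ω).toReal := by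
      intro t
      set L : ℝ := lastT B e (↑t) ω with hLdef
      have hsetne : (0:ℝ) ∈ {r : ℝ | (∃ n : ℕ, r = hitT B e n ω) ∧ r ≤ (t:ℝ)} :=
        ⟨⟨0, rfl⟩, t.2.1⟩
      have hbdd : BddAbove {r : ℝ | (∃ n : ℕ, r = hitT B e n ω) ∧ r ≤ (t:ℝ)} :=
        ⟨(t:ℝ), fun r hr => hr.2⟩
      have hL0 : 0 ≤ L := le_csSup hbdd hsetne
      have hLT : L ≤ T := le_trans (csSup_le ⟨0, hsetne⟩ fun r hr => hr.2) t.2.2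
      by_cases hint : IntervalIntegrable
          (fun s => rho2 H L s * |walk B e s ω - B s ω|) volume 0 L
      · rw [intervalIntegral.integral_of_le hL0]
        have hIoc := (intervalIntegrable_iff_integrableOn_Ioc_of_le hL0).mp hint
        have hnn : 0 ≤ᵐ[volume.restrict (Ioc (0:ℝ) L)]
            fun s => rho2 H L s * |walk B e s ω - B s ω| := by
          refine (ae_restrict_iff' measurableSet_Ioc).mpr (ae_of_all _ fun s hs => ?_)
          exact mul_nonneg (rho2_nonneg (le_of_lt hs.1) hs.2) (abs_nonneg _)
        rw [integral_eq_lintegral_of_nonneg_ae hnn hIoc.aestronglyMeasurable]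
        apply ENNReal.toReal_mono (ne_of_lt hfinw)
        calc ∫⁻ s in Ioc (0:ℝ) L, ENNReal.ofReal (rho2 H L s * |walk B e s ω - B s ω|)
            ≤ ∫⁻ s in Ioc (0:ℝ) L,
                ENNReal.ofReal (K * Real.exp (Real.log s * (-H - 1 / 2))) * Ffun B e s ω := by
              apply lintegral_mono_ae
              refine (ae_restrict_iff' measurableSet_Ioc).mpr (ae_of_all _ fun s hs => ?_)
              have hs0 : 0 < s := hs.1
              have hwe : Real.exp (Real.log s * (-H - 1 / 2)) = s ^ (-H - 1 / 2) :=
                (Real.rpow_def_of_pos hs0 _).symm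
              rw [hwe]
              have h1 : rho2 H L s * |walk B e s ω - B s ω| ≤
                  (K * s ^ (-H - 1 / 2)) * |walk B e s ω - B s ω| := by
                apply mul_le_mul_of_nonneg_right ?_ (abs_nonneg _)
                exact rho2_le hH1 hH2 hs0 hs.2 hLT
              calc ENNReal.ofReal (rho2 H L s * |walk B e s ω - B s ω|)
                  ≤ ENNReal.ofReal ((K * s ^ (-H - 1 / 2)) * |walk B e s ω - B s ω|) :=
                    ENNReal.ofReal_le_ofReal h1
                _ = ENNReal.ofReal (K * s ^ (-H - 1 / 2)) *
                    ENNReal.ofReal |walk B e s ω - B s ω| :=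
                    ENNReal.ofReal_mul
                      (mul_nonneg hK0' (Real.rpow_nonneg (le_of_lt hs0) _))
                _ ≤ ENNReal.ofReal (K * s ^ (-H - 1 / 2)) * Ffun B e s ω :=
                    mul_le_mul_right (Ffun_pathwise hc h0 hu he (le_of_lt hs0)) _
          _ ≤ LL ω := by
              rw [hLL]
              exact lintegral_mono' (Measure.restrict_mono
                (Ioc_subset_Ioc le_rfl hLT) le_rfl) le_rfl
      · rw [intervalIntegral.integral_undef hint]
        exact ENNReal.toReal_nonneg
    have hsup : (⨆ t : Icc (0:ℝ) T, ∫ s in (0:ℝ)..(lastT B e (↑t) ω),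
        rho2 H (lastT B e (↑t) ω) s * |walk B e s ω - B s ω|) ≤ (LL ω).toReal :=
      ciSup_le hbound
    calc ENNReal.ofReal (⨆ t : Icc (0:ℝ) T, ∫ s in (0:ℝ)..(lastT B e (↑t) ω),
          rho2 H (lastT B e (↑t) ω) s * |walk B e s ω - B s ω|)
        ≤ ENNReal.ofReal ((LL ω).toReal) := ENNReal.ofReal_le_ofReal hsup
      _ = LL ω := ENNReal.ofReal_toReal (ne_of_lt hfinw)
  -- nonnegativity of the supremum
  have hgnn : ∀ ω, 0 ≤ ⨆ t : Icc (0:ℝ) T, ∫ s in (0:ℝ)..(lastT B e (↑t) ω),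
      rho2 H (lastT B e (↑t) ω) s * |walk B e s ω - B s ω| := by
    intro ω
    apply Real.iSup_nonneg
    intro t
    apply intervalIntegral.integral_nonneg
    · exact le_csSup ⟨(t:ℝ), fun r hr => hr.2⟩ ⟨⟨0, rfl⟩, t.2.1⟩
    · intro u hu
      exact mul_nonneg (rho2_nonneg hu.1 hu.2) (abs_nonneg _)
  have hnum : (0:ℝ) ≤ K * (98 * cH * e ^ (2 - 2 * H)) :=
    mul_nonneg hK0' (mul_nonneg (by linarith)
      (Real.rpow_nonneg (le_of_lt he) _))
  have hfinal : (∫ ω, (⨆ t : Icc (0:ℝ) T, ∫ s in (0:ℝ)..(lastT B e (↑t) ω),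
      rho2 H (lastT B e (↑t) ω) s * |walk B e s ω - B s ω|) ∂P) ≤
      K * (98 * cH * e ^ (2 - 2 * H)) := by
    by_cases hIg : Integrable (fun ω => ⨆ t : Icc (0:ℝ) T, ∫ s in (0:ℝ)..(lastT B e (↑t) ω),
        rho2 H (lastT B e (↑t) ω) s * |walk B e s ω - B s ω|) P
    · rw [integral_eq_lintegral_of_nonneg_ae (ae_of_all _ hgnn) hIg.aestronglyMeasurable]
      have h1 : ∫⁻ ω, ENNReal.ofReal (⨆ t : Icc (0:ℝ) T, ∫ s in (0:ℝ)..(lastT B e (↑t) ω),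
          rho2 H (lastT B e (↑t) ω) s * |walk B e s ω - B s ω|) ∂P ≤
          ENNReal.ofReal K * ENNReal.ofReal (98 * cH * e ^ (2 - 2 * H)) :=
        le_trans (lintegral_mono_ae hdom) hexp
      refine le_trans (ENNReal.toReal_mono hRHSne h1) ?_
      rw [← ENNReal.ofReal_mul hK0', ENNReal.toReal_ofReal hnum]
    · rw [integral_undef hIg]
      exact hnum
  refine le_trans hfinal ?_
  rw [hC]
  have hsplit : e ^ (2 - 2 * H) = e ^ (1 - 2 * lam) * e ^ (2 * lam + 1 - 2 * H) := by
    rw [← Real.rpow_add he]; congr 1; ring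
  have hMe : e ^ (2 * lam + 1 - 2 * H) ≤ M ^ (2 * lam + 1 - 2 * H) :=
    Real.rpow_le_rpow (le_of_lt he) heM (by linarith)
  have h2 : (0:ℝ) ≤ e ^ (1 - 2 * lam) := Real.rpow_nonneg (le_of_lt he) _
  calc K * (98 * cH * e ^ (2 - 2 * H))
      = (K * (98 * cH)) * (e ^ (1 - 2 * lam) * e ^ (2 * lam + 1 - 2 * H)) := by
        rw [hsplit]; ring
    _ ≤ (K * (98 * cH)) * (e ^ (1 - 2 * lam) * M ^ (2 * lam + 1 - 2 * H)) := by
        apply mul_le_mul_of_nonneg_left ?_ (mul_nonneg hK0' (by linarith))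
        exact mul_le_mul_of_nonneg_left hMe h2
    _ = K * (98 * cH) * M ^ (2 * lam + 1 - 2 * H) * e ^ (1 - 2 * lam) := by ring
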